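/- arXiv:1901.01997 — 9 statements merged into one kernel-verified Lean document; each statement's English description precedes it below -/
import Mathlib

section
/- For tensors A ∈ ℂ^{n1×n2×n3} and B ∈ ℂ^{n2×n1×n3}, the trace of the tensor product satisfies tr(A * B) = tr( (Σ_{i=1}^{n3} A^{(i)}) (Σ_{i=1}^{n3} B^{(i)}) ). -/
open Finset Matrix

/-- Block circulant matrix of a tensor given by its frontal slices:
the (p,q) block is the slice with index (p - q) mod n3. -/
noncomputable def bcirc {n1 n2 n3 : ℕ} [NeZero n3]
    (A : Fin n3 → Matrix (Fin n1) (Fin n2) ℂ) :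
    Matrix (Fin n3 × Fin n1) (Fin n3 × Fin n2) ℂ :=
  fun p q => A (p.1 - q.1) p.2 q.2

/-- Unfold operator: stacks the frontal slices of a tensor vertically. -/
def unfold {n2 n3 n4 : ℕ} (B : Fin n3 → Matrix (Fin n2) (Fin n4) ℂ) :
    Matrix (Fin n3 × Fin n2) (Fin n4) ℂ :=
  fun p j => B p.1 p.2 j

/-- t-product A * B = fold(bcirc(A) · unfold(B)), given by its frontal slices. -/
noncomputable def tProd {n1 n2 n3 n4 : ℕ} [NeZero n3]
    (A : Fin n3 → Matrix (Fin n1) (Fin n2) ℂ)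
    (B : Fin n3 → Matrix (Fin n2) (Fin n4) ℂ) :
    Fin n3 → Matrix (Fin n1) (Fin n4) ℂ :=
  fun t => fun i j => (bcirc A * unfold B) (t, i) j

/-- trace of the t-product equals the trace of the product of the
sums of frontal slices. -/
theorem trace_tProd_eq_trace_sum_mul_sum (n1 n2 n3 : ℕ) [NeZero n3]
    (A : Fin n3 → Matrix (Fin n1) (Fin n2) ℂ)
    (B : Fin n3 → Matrix (Fin n2) (Fin n1) ℂ) :
    ∑ t : Fin n3, (tProd A B t).trace =
      ((∑ i : Fin n3, A i) * (∑ i : Fin n3, B i)).trace := by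
  simp only [trace, tProd, Matrix.mul_apply, unfold, bcirc, Matrix.diag_apply,
    Finset.sum_apply, Matrix.sum_apply, Fintype.sum_prod_type,
    Finset.sum_mul, Finset.mul_sum]
  calc ∑ t : Fin n3, ∑ i : Fin n1, ∑ s : Fin n3, ∑ k : Fin n2,
        A (t - s) i k * B s k i
      = ∑ i : Fin n1, ∑ t : Fin n3, ∑ s : Fin n3, ∑ k : Fin n2,
        A (t - s) i k * B s k i := Finset.sum_comm
    _ = ∑ i : Fin n1, ∑ s : Fin n3, ∑ t : Fin n3, ∑ k : Fin n2,
        A (t - s) i k * B s k i :=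
        Finset.sum_congr rfl fun i _ => Finset.sum_comm
    _ = ∑ i : Fin n1, ∑ s : Fin n3, ∑ k : Fin n2, ∑ t : Fin n3,
        A (t - s) i k * B s k i :=
        Finset.sum_congr rfl fun i _ => Finset.sum_congr rfl fun s _ =>
          Finset.sum_comm
    _ = ∑ i : Fin n1, ∑ s : Fin n3, ∑ k : Fin n2, ∑ a : Fin n3,
        A a i k * B s k i :=
        Finset.sum_congr rfl fun i _ => Finset.sum_congr rfl fun s _ =>
          Finset.sum_congr rfl fun k _ =>
            Fintype.sum_equiv (Equiv.subRight s) _ _ fun t => rfl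
    _ = ∑ i : Fin n1, ∑ k : Fin n2, ∑ s : Fin n3, ∑ a : Fin n3,
        A a i k * B s k i :=
        Finset.sum_congr rfl fun i _ => Finset.sum_comm
end

section
/- For tensors A ∈ ℂ^{n1×n2×n3} and B ∈ ℂ^{n2×n1×n3}, tr(A * B) = tr(Ā^{(1)} B̄^{(1)}), where Ā^{(1)} and B̄^{(1)} are the first frontal slices of the DFTs of A and B along the third dimension. -/
open Finset Matrix

/-- The k-th frontal slice of the DFT of a tensor along the third dimension. -/
noncomputable def dftSlice {n1 n2 n3 : ℕ} (A : Fin n3 → Matrix (Fin n1) (Fin n2) ℂ)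
    (k : Fin n3) : Matrix (Fin n1) (Fin n2) ℂ :=
  ∑ t : Fin n3,
    (Complex.exp (-(2 * Real.pi * Complex.I) / n3) ^ ((t : ℕ) * (k : ℕ))) • A t

/-- trace of the t-product equals the trace of the product of the
first Fourier-domain frontal slices. -/
theorem trace_tProd_eq_trace_fourier_first_slices (n1 n2 n3 : ℕ) [NeZero n3]
    (A : Fin n3 → Matrix (Fin n1) (Fin n2) ℂ)
    (B : Fin n3 → Matrix (Fin n2) (Fin n1) ℂ) :
    ∑ t : Fin n3, (tProd A B t).trace =
      (dftSlice A 0 * dftSlice B 0).trace := by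
  have hA : dftSlice A 0 = ∑ t : Fin n3, A t := by
    simp [dftSlice]
  have hB : dftSlice B 0 = ∑ t : Fin n3, B t := by
    simp [dftSlice]
  rw [hA, hB, Matrix.sum_mul]
  simp only [Matrix.mul_sum, Matrix.trace_sum]
  -- RHS is ∑ u, ∑ s, (A u * B s).trace
  have lhs_eq : ∀ t : Fin n3, (tProd A B t).trace
      = ∑ s : Fin n3, ∑ i : Fin n1, ∑ k : Fin n2, A (t - s) i k * B s k i := by
    intro t
    simp only [tProd, Matrix.trace, Matrix.diag, Matrix.mul_apply, bcirc, unfold,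
      Fintype.sum_prod_type]
    exact Finset.sum_comm
  simp only [lhs_eq]
  conv_lhs => rw [Finset.sum_comm]
  conv_rhs => rw [Finset.sum_comm]
  refine Finset.sum_congr rfl fun s _ => ?_
  refine Fintype.sum_equiv (Equiv.subRight s) _ _ fun t => ?_
  simp [Matrix.trace, Matrix.diag, Matrix.mul_apply, Equiv.subRight]
end

section
/- The conjugate transpose reverses the t-product: (A * B)^T = B^T * A^T, where the tensor conjugate transpose of A ∈ ℂ^{n1×n2×n3} is defined by (A^T)^{(1)} = (A^{(1)})^H and (A^T)^{(i)} = (A^{(n3+2-i)})^H for i = 2,…,n3. -/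
open Finset Matrix

/-- Tensor conjugate transpose: conjugate-transpose each frontal slice and
reverse the order of slices 2,…,n3 (slice k ↦ slice (-k) mod n3). -/
noncomputable def tTrans {n1 n2 n3 : ℕ} [NeZero n3]
    (A : Fin n3 → Matrix (Fin n1) (Fin n2) ℂ) :
    Fin n3 → Matrix (Fin n2) (Fin n1) ℂ :=
  fun k => (A (-k))ᴴ

/-- the conjugate transpose reverses the t-product. -/
theorem tTrans_tProd (n1 n2 n3 n4 : ℕ) [NeZero n3]
    (A : Fin n3 → Matrix (Fin n1) (Fin n2) ℂ)
    (B : Fin n3 → Matrix (Fin n2) (Fin n4) ℂ) :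
    tTrans (tProd A B) = tProd (tTrans B) (tTrans A) := by
  funext k
  ext j i
  simp only [tTrans, tProd, bcirc, unfold, Matrix.mul_apply, Matrix.conjTranspose_apply,
    Fintype.sum_prod_type, star_sum, star_mul']
  refine Fintype.sum_equiv (Equiv.addLeft k) _ _ fun q => ?_
  apply Finset.sum_congr rfl
  intro s _
  have h1 : -(k - (Equiv.addLeft k) q) = q := by simp
  have h2 : -((Equiv.addLeft k) q) = -k - q := by simp [Equiv.addLeft]; rw [sub_eq_add_neg, add_comm]
  rw [h1, h2]; ring
end

section
/- The conjugate transpose of a tensor commutes with the Fourier transform in the sense that the k-th frontal slice of the DFT of A^T equals the conjugate transpose of the k-th frontal slice of the DFT of A: (A^T)‾^{(k)} = (Ā^{(k)})^H. -/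
open Finset Matrix

private lemma negValAdd (n3 : ℕ) [NeZero n3] (t : Fin n3) :
    n3 ∣ ((-t : Fin n3) : ℕ) + (t : ℕ) := by
  have ht := t.isLt
  rw [Fin.neg_def]
  simp only [Fin.val_mk]
  rcases Nat.eq_zero_or_pos (t : ℕ) with h | h
  · simp [h]
  · rw [Nat.mod_eq_of_lt (by omega)]
    exact ⟨1, by omega⟩

/-- the DFT slice of the conjugate transpose is the conjugate
transpose of the DFT slice. -/
theorem dftSlice_tTrans (n1 n2 n3 : ℕ) [NeZero n3]
    (A : Fin n3 → Matrix (Fin n1) (Fin n2) ℂ) (k : Fin n3) :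
    dftSlice (tTrans A) k = (dftSlice A k)ᴴ := by
  simp only [dftSlice, tTrans]
  set ω : ℂ := Complex.exp (-(2 * Real.pi * Complex.I) / n3) with hω
  have hn3 : (n3 : ℂ) ≠ 0 := Nat.cast_ne_zero.mpr (NeZero.ne n3)
  have hωn : ω ^ n3 = 1 := by
    rw [hω, ← Complex.exp_nat_mul, mul_div_cancel₀ _ hn3]
    rw [show -(2 * (Real.pi:ℂ) * Complex.I) = ((-1 : ℤ) : ℂ) * (2 * Real.pi * Complex.I) by
      push_cast; ring]
    exact_mod_cast Complex.exp_int_mul_two_pi_mul_I (-1)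
  have habs : ‖ω‖ = 1 := by
    rw [hω, show -(2 * (Real.pi:ℂ) * Complex.I) / n3 = ((-(2 * Real.pi / n3) : ℝ) : ℂ) * Complex.I by
      push_cast; ring]
    exact Complex.norm_exp_ofReal_mul_I _
  have hne : ω ≠ 0 := by rw [hω]; exact Complex.exp_ne_zero _
  have hconj : ∀ m : ℕ, star (ω ^ m) = (ω ^ m)⁻¹ := by
    intro m
    have h1 : ‖ω ^ m‖ = 1 := by rw [norm_pow, habs, one_pow]
    apply eq_inv_of_mul_eq_one_left
    rw [show star (ω ^ m) = (starRingEnd ℂ) (ω ^ m) from rfl, mul_comm, Complex.mul_conj,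
      Complex.normSq_eq_norm_sq, h1]
    norm_num
  rw [Matrix.conjTranspose_sum]
  apply Fintype.sum_equiv (Equiv.neg (Fin n3))
  intro t
  simp only [Equiv.neg_apply, neg_neg, Matrix.conjTranspose_smul]
  congr 1
  rw [hconj]
  apply eq_inv_of_mul_eq_one_left
  rw [← pow_add, ← add_mul]
  obtain ⟨c, hc⟩ := negValAdd n3 t
  rw [Nat.add_comm, hc, mul_assoc, pow_mul, hωn, one_pow]
end

section
/- A tensor Q ∈ ℂ^{n×n×n3} is orthogonal (Q * Q^T = Q^T * Q = I) if and only if every Fourier-domain frontal slice Q̄^{(k)} is a unitary matrix. -/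
open Finset Matrix

/-- The identity tensor: first frontal slice is the identity matrix, others zero. -/
noncomputable def idTensor (n n3 : ℕ) [NeZero n3] :
    Fin n3 → Matrix (Fin n) (Fin n) ℂ :=
  fun k => if k = 0 then 1 else 0

noncomputable def wRoot (n3 : ℕ) : ℂ := Complex.exp (-(2 * Real.pi * Complex.I) / n3)

lemma wRoot_prim (n3 : ℕ) [NeZero n3] : IsPrimitiveRoot (wRoot n3) n3 := by
  have h : wRoot n3 = (Complex.exp (2 * Real.pi * Complex.I / n3))⁻¹ := by
    unfold wRoot
    rw [neg_div, Complex.exp_neg]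
  rw [h]
  exact (Complex.isPrimitiveRoot_exp n3 (NeZero.ne n3)).inv

lemma wRoot_pow_n3 (n3 : ℕ) [NeZero n3] : wRoot n3 ^ n3 = 1 :=
  (wRoot_prim n3).pow_eq_one

noncomputable def eChar {n3 : ℕ} (a : Fin n3) : ℂ := wRoot n3 ^ (a : ℕ)

lemma wRoot_pow_mod {n3 : ℕ} [NeZero n3] (x : ℕ) : wRoot n3 ^ (x % n3) = wRoot n3 ^ x := by
  conv_rhs => rw [← Nat.div_add_mod x n3]
  rw [pow_add, pow_mul, wRoot_pow_n3, one_pow, one_mul]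

lemma eChar_add {n3 : ℕ} [NeZero n3] (a b : Fin n3) : eChar (a + b) = eChar a * eChar b := by
  unfold eChar
  rw [Fin.val_add, wRoot_pow_mod, pow_add]

lemma eChar_zero {n3 : ℕ} [NeZero n3] : eChar (0 : Fin n3) = 1 := by
  simp [eChar]

lemma eChar_neg {n3 : ℕ} [NeZero n3] (a : Fin n3) : eChar (-a) = (eChar a)⁻¹ := by
  exact eq_inv_of_mul_eq_one_right (by rw [← eChar_add, add_neg_cancel, eChar_zero])

lemma star_wRoot (n3 : ℕ) [NeZero n3] : star (wRoot n3) = (wRoot n3)⁻¹ := by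
  unfold wRoot
  calc (star (Complex.exp (-(2 * Real.pi * Complex.I) / n3)) : ℂ)
      = Complex.exp ((starRingEnd ℂ) (-(2 * Real.pi * Complex.I) / n3)) :=
        (Complex.exp_conj _).symm
    _ = Complex.exp (-(-(2 * Real.pi * Complex.I) / n3)) := by
        congr 1
        simp [map_div₀, Complex.conj_I, map_ofNat]
        ring
    _ = (Complex.exp (-(2 * Real.pi * Complex.I) / n3))⁻¹ := Complex.exp_neg _

lemma star_eChar {n3 : ℕ} [NeZero n3] (a : Fin n3) : star (eChar a) = (eChar a)⁻¹ := by
  unfold eChar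
  rw [← inv_pow, ← star_wRoot]
  exact star_pow _ _

lemma eChar_ne_zero {n3 : ℕ} [NeZero n3] (a : Fin n3) : eChar a ≠ 0 := by
  unfold eChar wRoot
  exact pow_ne_zero _ (Complex.exp_ne_zero _)

lemma sum_eChar_pow {n3 : ℕ} [NeZero n3] (r : Fin n3) :
    ∑ k : Fin n3, eChar r ^ (k : ℕ) = if r = 0 then (n3 : ℂ) else 0 := by
  rw [Fin.sum_univ_eq_sum_range (fun k => eChar r ^ k) n3]
  split
  · next h => subst h; simp [eChar_zero]
  · next h =>
    have hne : eChar r ≠ 1 := by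
      intro h1
      have := ((wRoot_prim n3).pow_eq_one_iff_dvd (r : ℕ)).mp h1
      have h0 : (r : ℕ) = 0 := Nat.eq_zero_of_dvd_of_lt this r.isLt
      exact h (Fin.ext (by simp [h0]))
    have hpow : eChar r ^ n3 = 1 := by
      unfold eChar
      rw [← pow_mul, mul_comm, pow_mul, wRoot_pow_n3, one_pow]
    rw [geom_sum_eq hne, hpow, sub_self, zero_div]

lemma dftSlice_eq {n1 n2 n3 : ℕ} (A : Fin n3 → Matrix (Fin n1) (Fin n2) ℂ) (k : Fin n3) :
    dftSlice A k = ∑ t : Fin n3, (eChar t) ^ (k : ℕ) • A t := by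
  unfold dftSlice eChar wRoot
  simp [pow_mul]

lemma tProd_apply {n1 n2 n3 n4 : ℕ} [NeZero n3]
    (A : Fin n3 → Matrix (Fin n1) (Fin n2) ℂ)
    (B : Fin n3 → Matrix (Fin n2) (Fin n4) ℂ) (t : Fin n3) :
    tProd A B t = ∑ s : Fin n3, A (t - s) * B s := by
  funext i j
  simp [tProd, bcirc, unfold, Matrix.mul_apply, Matrix.sum_apply, Fintype.sum_prod_type]

lemma dft_tProd {n1 n2 n3 n4 : ℕ} [NeZero n3]
    (A : Fin n3 → Matrix (Fin n1) (Fin n2) ℂ)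
    (B : Fin n3 → Matrix (Fin n2) (Fin n4) ℂ) (k : Fin n3) :
    dftSlice (tProd A B) k = dftSlice A k * dftSlice B k := by
  simp only [dftSlice_eq, tProd_apply]
  calc ∑ t : Fin n3, eChar t ^ (k : ℕ) • ∑ s : Fin n3, A (t - s) * B s
      = ∑ t : Fin n3, ∑ s : Fin n3, eChar t ^ (k : ℕ) • (A (t - s) * B s) := by
        simp [Finset.smul_sum]
    _ = ∑ s : Fin n3, ∑ t : Fin n3, eChar t ^ (k : ℕ) • (A (t - s) * B s) :=
        Finset.sum_comm
    _ = ∑ s : Fin n3, ∑ r : Fin n3, eChar (r + s) ^ (k : ℕ) • (A r * B s) := by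
        refine Finset.sum_congr rfl fun s _ => ?_
        refine (Fintype.sum_equiv (Equiv.addRight s) _ _ fun r => ?_).symm
        simp
    _ = ∑ s : Fin n3, ∑ r : Fin n3, (eChar r ^ (k : ℕ) • A r) * (eChar s ^ (k : ℕ) • B s) := by
        refine Finset.sum_congr rfl fun s _ => Finset.sum_congr rfl fun r _ => ?_
        rw [eChar_add, mul_pow]
        simp [smul_mul_assoc, mul_smul_comm, smul_smul, mul_comm]
    _ = (∑ r : Fin n3, eChar r ^ (k : ℕ) • A r) * ∑ s : Fin n3, eChar s ^ (k : ℕ) • B s := by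
        rw [Matrix.mul_sum]
        refine Finset.sum_congr rfl fun s _ => ?_
        rw [Matrix.sum_mul]

lemma dft_tTrans {n1 n2 n3 : ℕ} [NeZero n3]
    (Q : Fin n3 → Matrix (Fin n1) (Fin n2) ℂ) (k : Fin n3) :
    dftSlice (tTrans Q) k = (dftSlice Q k)ᴴ := by
  simp only [dftSlice_eq, tTrans, Matrix.conjTranspose_sum]
  refine Fintype.sum_equiv (Equiv.neg (Fin n3)) _ _ fun t => ?_
  simp only [Equiv.neg_apply, neg_neg, Matrix.conjTranspose_smul]
  rw [star_pow, star_eChar, ← eChar_neg, neg_neg]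

lemma dft_id {n n3 : ℕ} [NeZero n3] (k : Fin n3) :
    dftSlice (idTensor n n3) k = 1 := by
  rw [dftSlice_eq]
  rw [Finset.sum_eq_single 0]
  · simp [idTensor, eChar_zero]
  · intro b _ hb
    simp [idTensor, hb]
  · simp

lemma dft_inv {n1 n2 n3 : ℕ} [NeZero n3]
    (A : Fin n3 → Matrix (Fin n1) (Fin n2) ℂ) (t : Fin n3) :
    ∑ k : Fin n3, eChar (-t) ^ (k : ℕ) • dftSlice A k = (n3 : ℂ) • A t := by
  simp only [dftSlice_eq, Finset.smul_sum, smul_smul]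
  rw [Finset.sum_comm]
  calc ∑ s : Fin n3, ∑ k : Fin n3, (eChar (-t) ^ (k : ℕ) * eChar s ^ (k : ℕ)) • A s
      = ∑ s : Fin n3, (∑ k : Fin n3, eChar (s - t) ^ (k : ℕ)) • A s := by
        refine Finset.sum_congr rfl fun s _ => ?_
        rw [← Finset.sum_smul]
        congr 1
        refine Finset.sum_congr rfl fun kk _ => ?_
        rw [← mul_pow, show s - t = s + (-t) from sub_eq_add_neg s t, eChar_add, mul_comm]
    _ = (n3 : ℂ) • A t := by
        simp only [sum_eChar_pow, sub_eq_zero]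
        rw [Finset.sum_eq_single t]
        · simp
        · intro b _ hb; simp [hb]
        · simp

lemma dft_injective {n1 n2 n3 : ℕ} [NeZero n3]
    (A B : Fin n3 → Matrix (Fin n1) (Fin n2) ℂ)
    (h : ∀ k, dftSlice A k = dftSlice B k) : A = B := by
  funext t
  have h1 := dft_inv A t
  have h2 := dft_inv B t
  simp only [h] at h1
  rw [h1] at h2
  have hn : (n3 : ℂ) ≠ 0 := Nat.cast_ne_zero.mpr (NeZero.ne n3)
  exact smul_right_injective _ hn h2

/-- a tensor is orthogonal iff all its Fourier-domain frontal
slices are unitary matrices. -/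
theorem orthogonal_iff_fourier_slices_unitary (n n3 : ℕ) [NeZero n3]
    (Q : Fin n3 → Matrix (Fin n) (Fin n) ℂ) :
    (tProd Q (tTrans Q) = idTensor n n3 ∧ tProd (tTrans Q) Q = idTensor n n3) ↔
      ∀ k : Fin n3,
        dftSlice Q k * (dftSlice Q k)ᴴ = 1 ∧ (dftSlice Q k)ᴴ * dftSlice Q k = 1 := by
  constructor
  · rintro ⟨h1, h2⟩ k
    constructor
    · have := congrArg (fun A => dftSlice A k) h1
      simpa [dft_tProd, dft_tTrans, dft_id] using this
    · have := congrArg (fun A => dftSlice A k) h2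
      simpa [dft_tProd, dft_tTrans, dft_id] using this
  · intro h
    constructor
    · refine dft_injective _ _ fun k => ?_
      rw [dft_tProd, dft_tTrans, dft_id]
      exact (h k).1
    · refine dft_injective _ _ fun k => ?_
      rw [dft_tProd, dft_tTrans, dft_id]
      exact (h k).2
end

section
/- Every tensor A ∈ ℂ^{n1×n2×n3} admits a tensor singular value decomposition A = U * S * V^T with U ∈ ℂ^{n1×n1×n3} and V ∈ ℂ^{n2×n2×n3} orthogonal tensors and S ∈ ℂ^{n1×n2×n3} f-diagonal (each frontal slice is a diagonal matrix). -/
open Finset Matrix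

open scoped ComplexOrder

namespace TSVD

set_option linter.unusedSectionVars false


set_option linter.unusedSectionVars false

variable {n3 : ℕ} [NeZero n3]

noncomputable def ω (n3 : ℕ) : ℂ := Complex.exp (2 * Real.pi * Complex.I / n3)

lemma ω_prim (n3 : ℕ) [NeZero n3] : IsPrimitiveRoot (ω n3) n3 :=
  Complex.isPrimitiveRoot_exp n3 (NeZero.ne n3)

lemma ω_pow_n : (ω n3) ^ n3 = 1 := (ω_prim n3).pow_eq_one

lemma ω_ne_zero : ω n3 ≠ 0 := Complex.exp_ne_zero _

lemma ω_conj : (starRingEnd ℂ) (ω n3) = (ω n3)⁻¹ := by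
  have h1 : (starRingEnd ℂ) (2 * Real.pi * Complex.I / n3) = -(2 * Real.pi * Complex.I / n3) := by
    simp only [map_div₀, _root_.map_mul, Complex.conj_I, Complex.conj_ofReal, map_ofNat, map_natCast]
    ring
  rw [ω, ← Complex.exp_conj, h1, Complex.exp_neg]

lemma ω_pow_mod (m : ℕ) : (ω n3) ^ m = (ω n3) ^ (m % n3) := by
  conv_lhs => rw [← Nat.mod_add_div m n3]
  rw [pow_add, pow_mul, ω_pow_n, one_pow, mul_one]

lemma ω_pow_congr {x y : ℕ} (h : x ≡ y [MOD n3]) : (ω n3) ^ x = (ω n3) ^ y := by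
  rw [ω_pow_mod, h, ← ω_pow_mod]

/-- characters -/
noncomputable def e (j k : Fin n3) : ℂ := (ω n3) ^ (j.1 * k.1)

lemma e_symm (j k : Fin n3) : e j k = e k j := by rw [e, e, Nat.mul_comm]

lemma e_add (j a b : Fin n3) : e j (a + b) = e j a * e j b := by
  rw [e, e, e, ← pow_add, ← Nat.mul_add]
  apply ω_pow_congr
  apply Nat.ModEq.mul_left
  rw [Fin.val_add]
  exact Nat.mod_modEq _ n3

lemma e_zero_right (j : Fin n3) : e j 0 = 1 := by simp [e]

lemma e_mul_conj_self (j k : Fin n3) : e j k * (starRingEnd ℂ) (e j k) = 1 := by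
  rw [e, map_pow, ω_conj, ← mul_pow, mul_inv_cancel₀ ω_ne_zero, one_pow]

lemma e_ne_zero (j k : Fin n3) : e j k ≠ 0 := pow_ne_zero _ ω_ne_zero

lemma e_neg_right (j m : Fin n3) : e j (-m) = (starRingEnd ℂ) (e j m) := by
  have h1 : e j (-m) * e j m = 1 := by rw [← e_add, neg_add_cancel, e_zero_right]
  have h2 : (starRingEnd ℂ) (e j m) * e j m = 1 := by
    rw [mul_comm]; exact e_mul_conj_self j m
  exact mul_right_cancel₀ (e_ne_zero j m) (h1.trans h2.symm)

/-- key orthogonality -/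
lemma e_orth (j i : Fin n3) :
    ∑ t : Fin n3, e t j * (starRingEnd ℂ) (e t i) = if j = i then (n3 : ℂ) else 0 := by
  have hterm : ∀ t : Fin n3, e t j * (starRingEnd ℂ) (e t i)
      = ((ω n3) ^ j.1 * ((ω n3)⁻¹) ^ i.1) ^ t.1 := by
    intro t
    rw [e, e, map_pow, ω_conj, mul_pow, ← pow_mul, ← pow_mul,
      Nat.mul_comm (j.1) (t.1), Nat.mul_comm (i.1) (t.1)]
  simp only [hterm]
  set z : ℂ := (ω n3) ^ j.1 * ((ω n3)⁻¹) ^ i.1 with hz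
  have hzn : z ^ n3 = 1 := by
    rw [hz, mul_pow, ← pow_mul, ← pow_mul, Nat.mul_comm (j.1) n3, Nat.mul_comm (i.1) n3, pow_mul, pow_mul,
      ω_pow_n, inv_pow, ω_pow_n, one_pow, inv_one, one_pow, one_mul]
  by_cases hij : j = i
  · subst hij
    have hz1 : z = 1 := by
      rw [hz, inv_pow, mul_inv_cancel₀ (pow_ne_zero _ ω_ne_zero)]
    simp [hz1]
  · have hz1 : z ≠ 1 := by
      intro h
      apply hij
      have hi : ((ω n3) ^ i.1) ≠ 0 := pow_ne_zero _ ω_ne_zero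
      have : (ω n3) ^ j.1 = (ω n3) ^ i.1 := by
        have := congrArg (· * (ω n3) ^ i.1) h
        simpa [hz, mul_assoc, inv_pow, inv_mul_cancel₀ hi] using this
      exact Fin.ext ((ω_prim n3).pow_inj j.2 i.2 this)
    rw [if_neg hij, Fin.sum_univ_eq_sum_range (fun t => z ^ t), geom_sum_eq hz1, hzn,
      sub_self, zero_div]

variable {m k : ℕ}

/-- slicewise DFT -/
noncomputable def Fdft (A : Fin n3 → Matrix (Fin m) (Fin k) ℂ) :
    Fin n3 → Matrix (Fin m) (Fin k) ℂ :=
  fun j => ∑ t, e j t • A t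

noncomputable def Finv (B : Fin n3 → Matrix (Fin m) (Fin k) ℂ) :
    Fin n3 → Matrix (Fin m) (Fin k) ℂ :=
  fun t => (n3 : ℂ)⁻¹ • ∑ j, (starRingEnd ℂ) (e j t) • B j

lemma n3_ne_zero : (n3 : ℂ) ≠ 0 := Nat.cast_ne_zero.mpr (NeZero.ne n3)

lemma collect (f : Fin n3 → Fin n3 → ℂ) (M : Fin n3 → Matrix (Fin m) (Fin k) ℂ) :
    ∑ t, ∑ i, f t i • M i = ∑ i, (∑ t, f t i) • M i := by
  rw [Finset.sum_comm]
  exact Finset.sum_congr rfl fun i _ => (Finset.sum_smul).symm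

lemma Finv_Fdft (A : Fin n3 → Matrix (Fin m) (Fin k) ℂ) : Finv (Fdft A) = A := by
  funext t
  have h1 : Finv (Fdft A) t
      = (n3 : ℂ)⁻¹ • ∑ s, (∑ j : Fin n3, (starRingEnd ℂ) (e j t) * e j s) • A s := by
    rw [Finv]
    congr 1
    simp only [Fdft, Finset.smul_sum, smul_smul]
    exact collect _ _
  rw [h1]
  have h2 : ∀ s : Fin n3, (∑ j : Fin n3, (starRingEnd ℂ) (e j t) * e j s)
      = if s = t then (n3 : ℂ) else 0 := by
    intro s
    rw [← e_orth s t]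
    exact Finset.sum_congr rfl fun j _ => by rw [e_symm j s, e_symm j t, mul_comm]
  simp only [h2, ite_smul, zero_smul]
  rw [Finset.sum_ite_eq' Finset.univ t (fun s => (n3 : ℂ) • A s)]
  simp [smul_smul, inv_mul_cancel₀ (n3_ne_zero (n3 := n3))]

lemma Fdft_Finv (B : Fin n3 → Matrix (Fin m) (Fin k) ℂ) : Fdft (Finv B) = B := by
  funext j
  have h1 : Fdft (Finv B) j
      = (n3 : ℂ)⁻¹ • ∑ i, (∑ t : Fin n3, e t j * (starRingEnd ℂ) (e t i)) • B i := by
    rw [Fdft]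
    have : ∀ t : Fin n3, e j t • Finv B t
        = (n3 : ℂ)⁻¹ • ∑ i, (e t j * (starRingEnd ℂ) (e t i)) • B i := by
      intro t
      rw [Finv, smul_comm, Finset.smul_sum]
      congr 1
      exact Finset.sum_congr rfl fun i _ => by rw [smul_smul, e_symm j t, e_symm i t]
    simp only [this]
    rw [← Finset.smul_sum]
    congr 1
    exact collect _ _
  rw [h1]
  simp only [fun i => e_orth j i, ite_smul, zero_smul]
  rw [Finset.sum_ite_eq Finset.univ j (fun i => (n3 : ℂ) • B i)]
  simp [smul_smul, inv_mul_cancel₀ (n3_ne_zero (n3 := n3))]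

-- convolution formula
lemma tProd_eq_conv {n1 n2 n4 : ℕ} (A : Fin n3 → Matrix (Fin n1) (Fin n2) ℂ)
    (B : Fin n3 → Matrix (Fin n2) (Fin n4) ℂ) (t : Fin n3) :
    tProd A B t = ∑ q : Fin n3, A (t - q) * B q := by
  funext i j
  show (bcirc A * unfold B) (t, i) j = _
  rw [Matrix.mul_apply]
  rw [Fintype.sum_prod_type]
  rw [Matrix.sum_apply]
  exact Finset.sum_congr rfl fun q _ => by rw [Matrix.mul_apply]; rfl

lemma Fdft_tProd {n1 n2 n4 : ℕ} (A : Fin n3 → Matrix (Fin n1) (Fin n2) ℂ)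
    (B : Fin n3 → Matrix (Fin n2) (Fin n4) ℂ) (j : Fin n3) :
    Fdft (tProd A B) j = Fdft A j * Fdft B j := by
  rw [Fdft, Fdft, Fdft]
  simp only [tProd_eq_conv]
  have lhs : ∑ t : Fin n3, e j t • ∑ q : Fin n3, A (t - q) * B q
      = ∑ t : Fin n3, ∑ q : Fin n3, e j t • (A (t - q) * B q) := by
    exact Finset.sum_congr rfl fun t _ => Finset.smul_sum
  rw [lhs, Finset.sum_comm, Matrix.mul_sum]
  apply Finset.sum_congr rfl
  intro q _
  rw [show ∑ t : Fin n3, e j t • (A (t - q) * B q)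
      = ∑ s : Fin n3, e j (s + q) • (A s * B q) from
    (Fintype.sum_equiv (Equiv.addRight q) _ _ (fun s => by
      rw [Equiv.coe_addRight, add_sub_cancel_right])).symm]
  rw [Matrix.sum_mul]
  apply Finset.sum_congr rfl
  intro s _
  rw [e_add, Matrix.smul_mul, Matrix.mul_smul, smul_smul]

lemma Fdft_idTensor (n : ℕ) (j : Fin n3) : Fdft (idTensor n n3) j = 1 := by
  rw [Fdft]
  simp only [idTensor]
  rw [Finset.sum_eq_single 0]
  · simp [e_zero_right]
  · intro b _ hb; simp [hb]
  · simp

lemma Fdft_tTrans {n1 n2 : ℕ} (A : Fin n3 → Matrix (Fin n1) (Fin n2) ℂ) (j : Fin n3) :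
    Fdft (tTrans A) j = (Fdft A j)ᴴ := by
  rw [Fdft, Fdft, Matrix.conjTranspose_sum]
  rw [show ∑ t : Fin n3, e j t • tTrans A t = ∑ s : Fin n3, e j (-s) • (A s)ᴴ from
    Fintype.sum_equiv (Equiv.neg (Fin n3)) _ _ (fun s => by
      rw [Equiv.neg_apply, tTrans, neg_neg])]
  apply Finset.sum_congr rfl
  intro s _
  rw [e_neg_right, Matrix.conjTranspose_smul]
  rfl



lemma matrix_svd (n1 n2 : ℕ) (A : Matrix (Fin n1) (Fin n2) ℂ) :
    ∃ (U : Matrix (Fin n1) (Fin n1) ℂ) (S : Matrix (Fin n1) (Fin n2) ℂ)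
      (V : Matrix (Fin n2) (Fin n2) ℂ),
      U * Uᴴ = 1 ∧ Uᴴ * U = 1 ∧ V * Vᴴ = 1 ∧ Vᴴ * V = 1 ∧
      (∀ (a : Fin n1) (b : Fin n2), (a : ℕ) ≠ (b : ℕ) → S a b = 0) ∧ A = U * S * Vᴴ := by
  classical
  set H : Matrix (Fin n2) (Fin n2) ℂ := Aᴴ * A with hHdef
  have hH : H.IsHermitian := Matrix.isHermitian_conjTranspose_mul_self A
  have hpsd : H.PosSemidef := Matrix.posSemidef_conjTranspose_mul_self A
  set d₀ : Fin n2 → ℝ := hH.eigenvalues with hd₀def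
  set σ : Equiv.Perm (Fin n2) := Tuple.sort (fun i => - d₀ i) with hσdef
  set d : Fin n2 → ℝ := fun j => d₀ (σ j) with hddef
  have hanti : Antitone d := by
    intro i j hij
    have := Tuple.monotone_sort (fun i => - d₀ i) hij
    simpa [hddef] using this
  have hd0 : ∀ j, 0 ≤ d j := fun j => hpsd.eigenvalues_nonneg _
  set W₀ : Matrix (Fin n2) (Fin n2) ℂ := (hH.eigenvectorUnitary : Matrix (Fin n2) (Fin n2) ℂ)
    with hW₀def
  have hW1 : W₀ᴴ * W₀ = 1 := by
    rw [← Matrix.star_eq_conjTranspose]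
    exact (Unitary.mem_iff.mp hH.eigenvectorUnitary.2).1
  have hW₀col : ∀ p q, ∑ i, star (W₀ i p) * W₀ i q = if p = q then 1 else 0 := by
    intro p q
    have h := congrFun (congrFun hW1 p) q
    rw [Matrix.mul_apply] at h
    simp only [Matrix.conjTranspose_apply] at h
    rw [h, Matrix.one_apply]
  -- eigen relation
  have hHW : ∀ i q, ∑ l, H i l * W₀ l q = (d₀ q : ℂ) * W₀ i q := by
    intro i q
    have h := congrFun (hH.mulVec_eigenvectorBasis q) i
    simp only [Matrix.mulVec, dotProduct, Pi.smul_apply, smul_eq_mul] at h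
    simpa [hW₀def, hH.eigenvectorUnitary_apply, Complex.real_smul] using h
  -- V
  set V : Matrix (Fin n2) (Fin n2) ℂ := fun i j => W₀ i (σ j) with hVdef
  have hVcol : ∀ j j', ∑ i, star (V i j) * V i j' = if j = j' then 1 else 0 := by
    intro j j'
    rw [show (∑ i, star (V i j) * V i j') = ∑ i, star (W₀ i (σ j)) * W₀ i (σ j') from rfl,
      hW₀col]
    simp [σ.injective.eq_iff]
  have hVV : Vᴴ * V = 1 := by
    ext j j'
    rw [Matrix.mul_apply, Matrix.one_apply]
    simp only [Matrix.conjTranspose_apply]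
    rw [hVcol j j']
  have hVV' : V * Vᴴ = 1 := mul_eq_one_comm.mp hVV
  -- X = A * V and its column structure
  set X : Matrix (Fin n1) (Fin n2) ℂ := A * V with hXdef
  have hd_cols : ∀ j j', ∑ i, star (X i j) * X i j' = if j = j' then (d j' : ℂ) else 0 := by
    intro j j'
    have h1 : ∑ i, star (X i j) * X i j' = (Vᴴ * (H * V)) j j' := by
      rw [show Vᴴ * (H * V) = Xᴴ * X by
        rw [hXdef, Matrix.conjTranspose_mul, hHdef, Matrix.mul_assoc, Matrix.mul_assoc]]
      rw [Matrix.mul_apply]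
      simp only [Matrix.conjTranspose_apply]
    rw [h1, Matrix.mul_apply]
    have h2 : ∀ p, (H * V) p j' = (d j' : ℂ) * V p j' := by
      intro p
      rw [Matrix.mul_apply]
      exact hHW p (σ j')
    simp only [h2, Matrix.conjTranspose_apply]
    rw [show (∑ p, star (V p j) * ((d j' : ℂ) * V p j'))
        = (d j' : ℂ) * ∑ p, star (V p j) * V p j' by
      rw [Finset.mul_sum]; exact Finset.sum_congr rfl fun p _ => by ring]
    rw [hVcol j j']
    by_cases h : j = j' <;> simp [h]
  -- zero columns
  have hXzero : ∀ j, d j = 0 → ∀ i, X i j = 0 := by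
    intro j hdj i
    have h := hd_cols j j
    rw [if_pos rfl, hdj, Complex.ofReal_zero] at h
    have h2 : ∑ i, (Complex.normSq (X i j) : ℂ) = 0 := by
      rw [← h]
      exact Finset.sum_congr rfl fun i _ => by
        rw [mul_comm]; exact (Complex.mul_conj _).symm
    have h3 : ∑ i, Complex.normSq (X i j) = 0 := by exact_mod_cast h2
    have := (Finset.sum_eq_zero_iff_of_nonneg (fun i _ => Complex.normSq_nonneg (X i j))).mp h3
      i (Finset.mem_univ i)
    exact Complex.normSq_eq_zero.mp this
  -- rank bound: sorted eigenvalues vanish past n1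
  have hcard : Fintype.card {i // d₀ i ≠ 0} ≤ n1 := by
    rw [← hH.rank_eq_card_non_zero_eigs]
    calc H.rank = A.rank := by rw [hHdef]; exact Matrix.rank_conjTranspose_mul_self A
    _ ≤ Fintype.card (Fin n1) := Matrix.rank_le_card_height A
    _ = n1 := Fintype.card_fin n1
  have hzero : ∀ j : Fin n2, n1 ≤ (j : ℕ) → d j = 0 := by
    intro j hj
    by_contra hdj
    have hlt : ∀ t : Fin n2, t ≤ j → d₀ (σ t) ≠ 0 := by
      intro t ht
      have h1 : d j ≤ d t := hanti ht
      have hpos : 0 < d j := lt_of_le_of_ne (hd0 j) (Ne.symm hdj)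
      exact ne_of_gt (lt_of_lt_of_le hpos h1)
    have hinj : Function.Injective (fun t : Fin (j.1 + 1) =>
        (⟨σ ⟨t.1, lt_of_le_of_lt (Nat.lt_succ_iff.mp t.2) j.2⟩,
          hlt _ (by rw [Fin.le_def]; exact Nat.lt_succ_iff.mp t.2)⟩ :
          {i // d₀ i ≠ 0})) := by
      intro t t' htt
      simp only [Subtype.mk.injEq, σ.injective.eq_iff, Fin.mk.injEq] at htt
      exact Fin.ext htt
    have := Fintype.card_le_of_injective _ hinj
    rw [Fintype.card_fin] at this
    omega
  -- orthonormal family of left singular vectors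
  set sSet : Set (Fin n1) := {a | ∃ h : (a : ℕ) < n2, d ⟨(a : ℕ), h⟩ ≠ 0} with hsdef
  set v : Fin n1 → EuclideanSpace ℂ (Fin n1) := fun a =>
    if h : (a : ℕ) < n2 then
      ((Real.sqrt (d ⟨(a : ℕ), h⟩) : ℂ))⁻¹ •
        (WithLp.equiv 2 (Fin n1 → ℂ)).symm (fun i => X i ⟨(a : ℕ), h⟩)
    else 0 with hvdef
  have hsv : Orthonormal ℂ (sSet.restrict v) := by
    rw [orthonormal_iff_ite]
    rintro ⟨a, h1, hd1⟩ ⟨a', h2, hd2⟩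
    have hval : ∀ (a : Fin n1) (h : (a : ℕ) < n2) (i : Fin n1),
        (v a) i = ((Real.sqrt (d ⟨(a : ℕ), h⟩) : ℂ))⁻¹ * X i ⟨(a : ℕ), h⟩ := by
      intro a h i
      rw [hvdef]
      simp only [dif_pos h]
      rfl
    rw [PiLp.inner_apply]
    simp only [RCLike.inner_apply, Set.restrict_apply, hval a h1, hval a' h2]
    have hsum : ∑ i, (starRingEnd ℂ)
          ((Real.sqrt (d ⟨(a : ℕ), h1⟩) : ℂ)⁻¹ * X i ⟨(a : ℕ), h1⟩) *
          ((Real.sqrt (d ⟨(a' : ℕ), h2⟩) : ℂ)⁻¹ * X i ⟨(a' : ℕ), h2⟩)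
        = (Real.sqrt (d ⟨(a : ℕ), h1⟩) : ℂ)⁻¹ * (Real.sqrt (d ⟨(a' : ℕ), h2⟩) : ℂ)⁻¹ *
          ∑ i, star (X i ⟨(a : ℕ), h1⟩) * X i ⟨(a' : ℕ), h2⟩ := by
      rw [Finset.mul_sum]
      refine Finset.sum_congr rfl fun i _ => ?_
      rw [_root_.map_mul, map_inv₀, Complex.conj_ofReal, starRingEnd_apply]
      ring
    rw [show (∑ x, (sSet.restrict v ⟨a', ⟨h2, hd2⟩⟩).ofLp x * (starRingEnd ℂ) ((sSet.restrict v ⟨a, ⟨h1, hd1⟩⟩).ofLp x)) = ∑ i, (starRingEnd ℂ) ((Real.sqrt (d ⟨(a : ℕ), h1⟩) : ℂ)⁻¹ * X i ⟨(a : ℕ), h1⟩) * ((Real.sqrt (d ⟨(a' : ℕ), h2⟩) : ℂ)⁻¹ * X i ⟨(a' : ℕ), h2⟩) from Finset.sum_congr rfl fun x _ => by show (v a').ofLp x * (starRingEnd ℂ) ((v a).ofLp x) = _; rw [hval a h1, hval a' h2, mul_comm], hsum, hd_cols]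
    by_cases haa : a = a'
    · subst haa
      rw [if_pos rfl, if_pos rfl]
      have hdpos : (0:ℝ) < d ⟨(a : ℕ), h1⟩ := lt_of_le_of_ne (hd0 _) (Ne.symm hd1)
      have hs : Real.sqrt (d ⟨(a : ℕ), h1⟩) * Real.sqrt (d ⟨(a : ℕ), h1⟩)
          = d ⟨(a : ℕ), h1⟩ := Real.mul_self_sqrt (hd0 _)
      have hsne : Real.sqrt (d ⟨(a : ℕ), h1⟩) ≠ 0 := by positivity
      field_simp
      exact_mod_cast (Real.sq_sqrt (hd0 _)).symm
    · have hne : (⟨(a : ℕ), h1⟩ : Fin n2) ≠ ⟨(a' : ℕ), h2⟩ := by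
        intro hcon
        exact haa (Fin.ext (by simpa using congrArg Fin.val hcon))
      rw [if_neg hne, if_neg (by simpa using haa)]
      ring
  have hdim : Module.finrank ℂ (EuclideanSpace ℂ (Fin n1)) = Fintype.card (Fin n1) := by
    simp
  obtain ⟨b, hb⟩ := hsv.exists_orthonormalBasis_extension_of_card_eq hdim
  set U : Matrix (Fin n1) (Fin n1) ℂ := fun i a => (b a) i with hUdef
  have hUU : Uᴴ * U = 1 := by
    ext a a'
    rw [Matrix.mul_apply, Matrix.one_apply]
    have hon := orthonormal_iff_ite.mp b.orthonormal a a'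
    rw [PiLp.inner_apply] at hon
    simp only [RCLike.inner_apply] at hon
    rw [← hon]
    exact Finset.sum_congr rfl fun x _ => mul_comm _ _
  -- the diagonal rectangular matrix
  set S : Matrix (Fin n1) (Fin n2) ℂ := fun a bb =>
    if (a : ℕ) = (bb : ℕ) then (Real.sqrt (d bb) : ℂ) else 0 with hSdef
  have hSdiag : ∀ (a : Fin n1) (bb : Fin n2), (a : ℕ) ≠ (bb : ℕ) → S a bb = 0 :=
    fun a bb h => if_neg h
  have hAV : A * V = U * S := by
    ext i j
    rw [show (A * V) i j = X i j from rfl, Matrix.mul_apply]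
    by_cases hj : (j : ℕ) < n1
    · set a₀ : Fin n1 := ⟨(j : ℕ), hj⟩ with ha₀
      rw [Finset.sum_eq_single a₀ (fun a _ hne => by
        rw [hSdef]
        simp only
        rw [if_neg (fun hcon => hne (Fin.ext hcon)), mul_zero]) (fun h => absurd (Finset.mem_univ _) h)]
      have hS0 : S a₀ j = (Real.sqrt (d j) : ℂ) := by rw [hSdef]; exact if_pos rfl
      rw [hS0]
      have hj0 : (⟨(a₀ : ℕ), j.2⟩ : Fin n2) = j := Fin.ext rfl
      by_cases hdj : d j = 0
      · rw [hXzero j hdj i, hdj]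
        simp
      · have hmem : a₀ ∈ sSet := ⟨j.2, by rw [hj0]; exact hdj⟩
        have hba : b a₀ = v a₀ := hb a₀ hmem
        have hUi : U i a₀ = (Real.sqrt (d j) : ℂ)⁻¹ * X i j := by
          rw [hUdef]
          simp only
          rw [hba, hvdef]
          simp only [dif_pos (show ((a₀ : ℕ) : ℕ) < n2 from j.2)]
          rw [show (⟨(a₀ : ℕ), _⟩ : Fin n2) = j from Fin.ext rfl]
          rfl
        rw [hUi]
        have hsne : Real.sqrt (d j) ≠ 0 := by
          have hdpos : (0:ℝ) < d j := lt_of_le_of_ne (hd0 _) (Ne.symm hdj)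
          positivity
        have hsne' : (Real.sqrt (d j) : ℂ) ≠ 0 := by exact_mod_cast hsne
        field_simp
    · have hz : d j = 0 := hzero j (le_of_not_gt hj)
      rw [hXzero j hz i]
      symm
      refine Finset.sum_eq_zero fun a _ => ?_
      rw [hSdef]
      simp only
      rw [if_neg (by omega : ¬ ((a : ℕ) = (j : ℕ))), mul_zero]
  refine ⟨U, S, V, mul_eq_one_comm.mp hUU, hUU, hVV', hVV, hSdiag, ?_⟩
  calc A = A * (V * Vᴴ) := by rw [hVV', Matrix.mul_one]
  _ = (A * V) * Vᴴ := by rw [Matrix.mul_assoc]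
  _ = U * S * Vᴴ := by rw [hAV]


end TSVD

/-- every tensor admits a t-SVD A = U * S * Vᵀ with U, V
orthogonal tensors and S f-diagonal. -/
theorem exists_tSVD (n1 n2 n3 : ℕ) [NeZero n3]
    (A : Fin n3 → Matrix (Fin n1) (Fin n2) ℂ) :
    ∃ (U : Fin n3 → Matrix (Fin n1) (Fin n1) ℂ)
      (S : Fin n3 → Matrix (Fin n1) (Fin n2) ℂ)
      (V : Fin n3 → Matrix (Fin n2) (Fin n2) ℂ),
      (tProd U (tTrans U) = idTensor n1 n3 ∧ tProd (tTrans U) U = idTensor n1 n3) ∧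
      (tProd V (tTrans V) = idTensor n2 n3 ∧ tProd (tTrans V) V = idTensor n2 n3) ∧
      (∀ (i : Fin n3) (a : Fin n1) (b : Fin n2), (a : ℕ) ≠ (b : ℕ) → S i a b = 0) ∧
      A = tProd U (tProd S (tTrans V)) := by
  classical
  have Finj : ∀ {m k : ℕ} (X Y : Fin n3 → Matrix (Fin m) (Fin k) ℂ),
      TSVD.Fdft X = TSVD.Fdft Y → X = Y := by
    intro m k X Y h
    rw [← TSVD.Finv_Fdft X, h, TSVD.Finv_Fdft]
  have h : ∀ j : Fin n3, ∃ (Uh : Matrix (Fin n1) (Fin n1) ℂ) (Sh : Matrix (Fin n1) (Fin n2) ℂ)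
      (Vh : Matrix (Fin n2) (Fin n2) ℂ),
      Uh * Uhᴴ = 1 ∧ Uhᴴ * Uh = 1 ∧ Vh * Vhᴴ = 1 ∧ Vhᴴ * Vh = 1 ∧
      (∀ (a : Fin n1) (b : Fin n2), (a : ℕ) ≠ (b : ℕ) → Uh = Uh → Sh a b = 0) ∧
      TSVD.Fdft A j = Uh * Sh * Vhᴴ := by
    intro j
    obtain ⟨Uh, Sh, Vh, h1, h2, h3, h4, h5, h6⟩ := TSVD.matrix_svd n1 n2 (TSVD.Fdft A j)
    exact ⟨Uh, Sh, Vh, h1, h2, h3, h4, fun a b hab _ => h5 a b hab, h6⟩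
  choose Uh Sh Vh hU1 hU2 hV1 hV2 hSd hA using h
  have hFU : TSVD.Fdft (TSVD.Finv Uh) = Uh := TSVD.Fdft_Finv Uh
  have hFS : TSVD.Fdft (TSVD.Finv Sh) = Sh := TSVD.Fdft_Finv Sh
  have hFV : TSVD.Fdft (TSVD.Finv Vh) = Vh := TSVD.Fdft_Finv Vh
  refine ⟨TSVD.Finv Uh, TSVD.Finv Sh, TSVD.Finv Vh, ⟨?_, ?_⟩, ⟨?_, ?_⟩, ?_, ?_⟩
  · apply Finj
    funext j
    rw [TSVD.Fdft_tProd, TSVD.Fdft_tTrans, hFU, TSVD.Fdft_idTensor]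
    exact hU1 j
  · apply Finj
    funext j
    rw [TSVD.Fdft_tProd, TSVD.Fdft_tTrans, hFU, TSVD.Fdft_idTensor]
    exact hU2 j
  · apply Finj
    funext j
    rw [TSVD.Fdft_tProd, TSVD.Fdft_tTrans, hFV, TSVD.Fdft_idTensor]
    exact hV1 j
  · apply Finj
    funext j
    rw [TSVD.Fdft_tProd, TSVD.Fdft_tTrans, hFV, TSVD.Fdft_idTensor]
    exact hV2 j
  · intro i a b hab
    show TSVD.Finv Sh i a b = 0
    rw [TSVD.Finv]
    simp only [Matrix.smul_apply, Matrix.sum_apply]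
    rw [Finset.sum_eq_zero fun j _ => by
      rw [hSd j a b hab rfl, smul_zero]]
    simp
  · apply Finj
    funext j
    rw [TSVD.Fdft_tProd, TSVD.Fdft_tProd, TSVD.Fdft_tTrans, hFU, hFS, hFV, hA j,
      Matrix.mul_assoc]
end

section
/- Let A = U * S * V^T be a t-SVD. Then the tensor nuclear norm defined as tr(S) = Σ_{i=1}^{n3} tr(S^{(i)}) equals the matrix nuclear norm of the first Fourier-domain frontal slice: tr(S) = ‖Ā^{(1)}‖_*, provided S is obtained from the matrix SVDs of the Fourier slices Ā^{(k)} with nonnegative singular values. -/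
open Finset Matrix

/-- Trace of a (possibly rectangular) matrix: sum of its diagonal entries. -/
noncomputable def rtrace {n1 n2 : ℕ} (M : Matrix (Fin n1) (Fin n2) ℂ) : ℂ :=
  ∑ a : Fin (min n1 n2),
    M ⟨a, lt_of_lt_of_le a.2 (min_le_left _ _)⟩ ⟨a, lt_of_lt_of_le a.2 (min_le_right _ _)⟩

/-- Nuclear norm of a complex matrix: sum of its singular values, i.e. the sum
of the square roots of the eigenvalues of Mᴴ M. -/
noncomputable def nuclearNorm {n1 n2 : ℕ} (M : Matrix (Fin n1) (Fin n2) ℂ) : ℝ :=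
  ∑ i : Fin n2, Real.sqrt ((Matrix.isHermitian_conjTranspose_mul_self M).eigenvalues i)

open Polynomial

lemma my_charpoly_diagonal {m : ℕ} (d : Fin m → ℂ) :
    (Matrix.diagonal d).charpoly = ∏ i, (X - C (d i)) := by
  have h : Matrix.charmatrix (Matrix.diagonal d)
      = Matrix.diagonal (fun i => (X : ℂ[X]) - C (d i)) := by
    ext i j
    by_cases h : i = j
    · subst h; simp
    · simp [Matrix.charmatrix_apply_ne _ _ _ h, Matrix.diagonal_apply_ne _ h]
  rw [Matrix.charpoly, h, Matrix.det_diagonal]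

lemma my_charpoly_conj {m : ℕ} (W N : Matrix (Fin m) (Fin m) ℂ)
    (h1 : W * Wᴴ = 1) (h2 : Wᴴ * W = 1) :
    (W * N * Wᴴ).charpoly = N.charpoly := by
  have key : Matrix.charmatrix (W * N * Wᴴ) =
      W.map C * Matrix.charmatrix N * Wᴴ.map C := by
    rw [Matrix.charmatrix, Matrix.charmatrix, mul_sub, sub_mul]
    congr 1
    · symm
      rw [mul_assoc, (Matrix.scalar_commute (X : ℂ[X]) (Commute.all X) (Wᴴ.map C)).eq,
        ← mul_assoc, ← Matrix.map_mul, h1]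
      simp
    · rw [RingHom.mapMatrix_apply, RingHom.mapMatrix_apply, ← Matrix.map_mul, ← Matrix.map_mul]
  have hdet : (W.map (C : ℂ →+* ℂ[X])).det * (Wᴴ.map (C : ℂ →+* ℂ[X])).det = 1 := by
    rw [← Matrix.det_mul, ← Matrix.map_mul, h1]
    simp
  rw [Matrix.charpoly, key, Matrix.det_mul, Matrix.det_mul, Matrix.charpoly]
  have : (W.map (C : ℂ →+* ℂ[X])).det * (Matrix.charmatrix N).det * (Wᴴ.map (C : ℂ →+* ℂ[X])).det
      = ((W.map (C : ℂ →+* ℂ[X])).det * (Wᴴ.map (C : ℂ →+* ℂ[X])).det) * (Matrix.charmatrix N).det := by ring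
  rw [this, hdet, one_mul]

lemma eig_multiset {m : ℕ} {N : Matrix (Fin m) (Fin m) ℂ} (hN : N.IsHermitian)
    (W : Matrix (Fin m) (Fin m) ℂ) (d : Fin m → ℂ)
    (h1 : W * Wᴴ = 1) (h2 : Wᴴ * W = 1)
    (hrep : N = W * Matrix.diagonal d * Wᴴ) :
    Multiset.map (fun i => (hN.eigenvalues i : ℂ)) Finset.univ.val
      = Multiset.map d Finset.univ.val := by
  set U : Matrix (Fin m) (Fin m) ℂ := (hN.eigenvectorUnitary : Matrix (Fin m) (Fin m) ℂ) with hU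
  have hU1 : U * Uᴴ = 1 := by
    rw [← Matrix.star_eq_conjTranspose]
    exact Matrix.mem_unitaryGroup_iff.mp hN.eigenvectorUnitary.2
  have hU2 : Uᴴ * U = 1 := by
    rw [← Matrix.star_eq_conjTranspose]
    exact Matrix.mem_unitaryGroup_iff'.mp hN.eigenvectorUnitary.2
  have hcp1 : N.charpoly = ∏ i, (X - C ((hN.eigenvalues i : ℂ))) := by
    conv_lhs => rw [hN.spectral_theorem]
    rw [Unitary.conjStarAlgAut_apply, Matrix.star_eq_conjTranspose, ← hU, my_charpoly_conj _ _ hU1 hU2, my_charpoly_diagonal]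
    rfl
  have hcp2 : N.charpoly = ∏ i, (X - C (d i)) := by
    rw [hrep, my_charpoly_conj _ _ h1 h2, my_charpoly_diagonal]
  have h3 : ((Multiset.map (fun i => (hN.eigenvalues i : ℂ)) Finset.univ.val).map
        (fun a => X - C a)).prod
      = ((Multiset.map d Finset.univ.val).map (fun a => X - C a)).prod := by
    rw [Multiset.map_map, Multiset.map_map]
    exact (hcp1.symm.trans hcp2 :)
  have h4 := congrArg Polynomial.roots h3
  rwa [Polynomial.roots_multiset_prod_X_sub_C, Polynomial.roots_multiset_prod_X_sub_C] at h4


/-- for a t-SVD A = U * S * Vᵀ obtained from the matrix SVDs of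
the Fourier slices (with unitary factors and nonnegative diagonal slices), the
tensor nuclear norm tr(S) = Σᵢ tr(S⁽ⁱ⁾) equals the matrix nuclear norm of the
first Fourier-domain frontal slice of A. -/
theorem tensor_nuclear_norm_eq_nuclearNorm_first_fourier_slice
    (n1 n2 n3 : ℕ) [NeZero n3]
    (A : Fin n3 → Matrix (Fin n1) (Fin n2) ℂ)
    (U : Fin n3 → Matrix (Fin n1) (Fin n1) ℂ)
    (S : Fin n3 → Matrix (Fin n1) (Fin n2) ℂ)
    (V : Fin n3 → Matrix (Fin n2) (Fin n2) ℂ)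
    (hA : A = tProd U (tProd S (tTrans V)))
    (hSVD : ∀ k : Fin n3,
      dftSlice A k = dftSlice U k * dftSlice S k * (dftSlice V k)ᴴ)
    (hUunit : ∀ k : Fin n3,
      dftSlice U k * (dftSlice U k)ᴴ = 1 ∧ (dftSlice U k)ᴴ * dftSlice U k = 1)
    (hVunit : ∀ k : Fin n3,
      dftSlice V k * (dftSlice V k)ᴴ = 1 ∧ (dftSlice V k)ᴴ * dftSlice V k = 1)
    (hSdiag : ∀ (k : Fin n3) (a : Fin n1) (b : Fin n2),
      (a : ℕ) ≠ (b : ℕ) → dftSlice S k a b = 0)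
    (hSnonneg : ∀ (k : Fin n3) (a : Fin n1) (b : Fin n2),
      ∃ σ : ℝ, 0 ≤ σ ∧ dftSlice S k a b = (σ : ℂ)) :
    ∑ i : Fin n3, rtrace (S i) = (nuclearNorm (dftSlice A 0) : ℂ) := by
  classical
  set D : Matrix (Fin n1) (Fin n2) ℂ := dftSlice S 0 with hD
  set M : Matrix (Fin n1) (Fin n2) ℂ := dftSlice A 0 with hM0
  set U₀ : Matrix (Fin n1) (Fin n1) ℂ := dftSlice U 0 with hU0
  set V₀ : Matrix (Fin n2) (Fin n2) ℂ := dftSlice V 0 with hV0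
  have hre : ∀ (a : Fin n1) (b : Fin n2),
      D a b = ((D a b).re : ℂ) ∧ 0 ≤ (D a b).re := by
    intro a b
    obtain ⟨σ, hσ, h⟩ := hSnonneg 0 a b
    rw [hD, h]; simp [hσ]
  set d : Fin n2 → ℂ := fun b => (Dᴴ * D) b b with hd
  set F : ℕ → ℝ := fun j =>
    if h : j < n1 ∧ j < n2 then (D ⟨j, h.1⟩ ⟨j, h.2⟩).re else 0 with hF
  have hFval : ∀ (j : ℕ) (h : j < n1 ∧ j < n2), F j = (D ⟨j, h.1⟩ ⟨j, h.2⟩).re := by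
    intro j h; simp only [hF]; rw [dif_pos h]
  have hFzero : ∀ j : ℕ, ¬ j < n1 → F j = 0 := by
    intro j h; simp only [hF]; rw [dif_neg (by exact fun hc => h hc.1)]
  -- Dᴴ D is diagonal
  have hdiag : Dᴴ * D = Matrix.diagonal d := by
    ext b c
    by_cases h : b = c
    · subst h; simp [hd, Matrix.diagonal_apply_eq]
    · rw [Matrix.diagonal_apply_ne _ h, Matrix.mul_apply]
      apply Finset.sum_eq_zero
      intro a _
      rcases eq_or_ne (a : ℕ) (c : ℕ) with hac | hac
      · have hab : (a : ℕ) ≠ (b : ℕ) := by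
          intro hh; exact h (Fin.ext (hh.symm.trans hac))
        have : D a b = 0 := hSdiag 0 a b hab
        simp [Matrix.conjTranspose_apply, this]
      · have : D a c = 0 := hSdiag 0 a c hac
        simp [Matrix.conjTranspose_apply, this]
  -- the SVD of the first Fourier slice
  have hMsvd : M = U₀ * D * V₀ᴴ := hSVD 0
  have hrep : Mᴴ * M = V₀ * Matrix.diagonal d * V₀ᴴ := by
    rw [hMsvd, ← hdiag]
    simp only [Matrix.conjTranspose_mul, Matrix.conjTranspose_conjTranspose]
    simp only [Matrix.mul_assoc]
    congr 2
    rw [← Matrix.mul_assoc U₀ᴴ U₀, (hUunit 0).2, Matrix.one_mul]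
  have hN : (Mᴴ * M).IsHermitian := Matrix.isHermitian_conjTranspose_mul_self M
  have hmult :
      Multiset.map (fun i => (hN.eigenvalues i : ℂ)) Finset.univ.val
        = Multiset.map d Finset.univ.val :=
    eig_multiset hN V₀ d (hVunit 0).1 (hVunit 0).2 hrep
  -- value of sqrt (re (d b))
  have hdval : ∀ b : Fin n2, Real.sqrt ((d b).re) = F (b : ℕ) := by
    intro b
    by_cases hb : (b : ℕ) < n1
    · have hdb : d b = ∑ a : Fin n1, star (D a b) * D a b := by
        simp [hd, Matrix.mul_apply, Matrix.conjTranspose_apply]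
      have hsingle : (∑ a : Fin n1, star (D a b) * D a b)
          = star (D ⟨(b : ℕ), hb⟩ b) * D ⟨(b : ℕ), hb⟩ b := by
        apply Finset.sum_eq_single
        · intro a _ ha
          have : (a : ℕ) ≠ (b : ℕ) := fun hh => ha (Fin.ext hh)
          have : D a b = 0 := hSdiag 0 a b this
          simp [this]
        · intro h; exact absurd (Finset.mem_univ _) h
      set r : ℝ := (D ⟨(b : ℕ), hb⟩ b).re with hr
      have hDr : D ⟨(b : ℕ), hb⟩ b = (r : ℂ) := (hre _ _).1
      have hrpos : 0 ≤ r := (hre _ _).2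
      have hdbr : d b = ((r * r : ℝ) : ℂ) := by
        rw [hdb, hsingle, hDr]
        push_cast
        rw [Complex.star_def, Complex.conj_ofReal]
      have hcond : (b : ℕ) < n1 ∧ (b : ℕ) < n2 := ⟨hb, b.2⟩
      rw [hdbr, hFval _ hcond]
      simp only [Complex.ofReal_re]
      rw [Real.sqrt_mul_self hrpos]
    · have hdb : d b = 0 := by
        simp only [hd, Matrix.mul_apply, Matrix.conjTranspose_apply]
        apply Finset.sum_eq_zero
        intro a _
        have han : (a : ℕ) ≠ (b : ℕ) := fun hh => hb (hh ▸ a.2)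
        have : D a b = 0 := hSdiag 0 a b han
        simp [this]
      rw [hdb, hFzero _ hb]
      simp
  -- nuclear norm as a sum over F
  have hnn : nuclearNorm M = ∑ j ∈ Finset.range n2, F j := by
    have e1 : nuclearNorm M = ∑ i : Fin n2, Real.sqrt (hN.eigenvalues i) := rfl
    have e2 : ∑ i : Fin n2, Real.sqrt (hN.eigenvalues i)
        = (Multiset.map (fun z : ℂ => Real.sqrt z.re)
            (Multiset.map (fun i => (hN.eigenvalues i : ℂ)) Finset.univ.val)).sum := by
      rw [Multiset.map_map]
      rw [Finset.sum]
      congr 1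
    have e3 : (Multiset.map (fun z : ℂ => Real.sqrt z.re)
          (Multiset.map d Finset.univ.val)).sum
        = ∑ b : Fin n2, Real.sqrt ((d b).re) := by
      rw [Multiset.map_map, Finset.sum]
      rfl
    rw [e1, e2, hmult, e3]
    calc ∑ b : Fin n2, Real.sqrt ((d b).re) = ∑ b : Fin n2, F (b : ℕ) :=
          Finset.sum_congr rfl fun b _ => hdval b
      _ = ∑ j ∈ Finset.range n2, F j := Fin.sum_univ_eq_sum_range F n2
  have hnn2 : nuclearNorm M = ∑ j ∈ Finset.range (min n1 n2), F j := by
    rw [hnn]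
    symm
    apply Finset.sum_subset
    · exact Finset.range_subset_range.mpr (min_le_right _ _)
    · intro j hj hj2
      simp only [Finset.mem_range] at hj hj2
      exact hFzero _ (by omega)
  -- the left-hand side
  have hLHS : ∑ i : Fin n3, rtrace (S i)
      = ∑ a : Fin (min n1 n2), ((F (a : ℕ) : ℝ) : ℂ) := by
    unfold rtrace
    rw [Finset.sum_comm]
    apply Finset.sum_congr rfl
    intro a _
    have hcond : (a : ℕ) < n1 ∧ (a : ℕ) < n2 :=
      ⟨lt_of_lt_of_le a.2 (min_le_left _ _), lt_of_lt_of_le a.2 (min_le_right _ _)⟩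
    have hsum : (∑ i : Fin n3, S i ⟨a, lt_of_lt_of_le a.2 (min_le_left _ _)⟩
        ⟨a, lt_of_lt_of_le a.2 (min_le_right _ _)⟩)
        = D ⟨a, hcond.1⟩ ⟨a, hcond.2⟩ := by
      rw [hD]
      unfold dftSlice
      rw [Matrix.sum_apply]
      apply Finset.sum_congr rfl
      intro t _
      simp
    rw [hsum, (hre _ _).1, hFval _ hcond]
  rw [hLHS, hnn2]
  rw [← Complex.ofReal_sum]
  rw [← Fin.sum_univ_eq_sum_range F (min n1 n2)]
end

section
/- For a matrix X ∈ ℝ^{m×n} with singular values σ_1 ≥ σ_2 ≥ … ≥ σ_{min(m,n)}, the truncated nuclear norm satisfies ‖X‖_r := Σ_{j=r+1}^{min(m,n)} σ_j(X) = ‖X‖_* − max{ tr(A X B^T) : A ∈ ℝ^{r×m}, A A^T = I_r, B ∈ ℝ^{r×n}, B B^T = I_r }. -/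
open Matrix Finset

/-- Rectangular diagonal matrix with diagonal entries σ. -/
noncomputable def svdDiag (m n : ℕ) (σ : Fin (min m n) → ℝ) :
    Matrix (Fin m) (Fin n) ℝ :=
  Matrix.of fun i j =>
    if h : (i : ℕ) = (j : ℕ) ∧ (i : ℕ) < min m n then σ ⟨i, h.2⟩ else 0

private lemma tele_aux (τ : ℕ → ℝ) (a N : ℕ) (ha : a ≤ N) :
    ∑ k ∈ Finset.Ico a N, (τ k - τ (k+1)) = τ a - τ N := by
  rw [Finset.sum_Ico_eq_sum_range]
  have h := Finset.sum_range_sub' (fun i => τ (a + i)) (N - a)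
  simpa [Nat.add_sub_cancel' ha, Nat.add_assoc] using h

private lemma sum_dite_le {N : ℕ} (k : ℕ) (g : Fin N → ℝ) (hg : ∀ j, 0 ≤ g j) :
    (∑ j ∈ Finset.range k, (if h : j < N then g ⟨j, h⟩ else 0)) ≤ ∑ j : Fin N, g j := by
  have h1 : (∑ j ∈ Finset.range k, (if h : j < N then g ⟨j, h⟩ else 0))
      ≤ ∑ j ∈ Finset.range (max k N), (if h : j < N then g ⟨j, h⟩ else 0) := by
    apply Finset.sum_le_sum_of_subset_of_nonneg (Finset.range_subset_range.2 (le_max_left _ _))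
    intro i _ _
    split
    · exact hg _
    · exact le_refl 0
  have h2 : ∑ j ∈ Finset.range (max k N), (if h : j < N then g ⟨j, h⟩ else 0)
      = ∑ j ∈ Finset.range N, (if h : j < N then g ⟨j, h⟩ else 0) := by
    rw [Finset.range_eq_Ico,
      ← Finset.sum_Ico_consecutive _ (Nat.zero_le N) (le_max_right k N)]
    have : ∑ j ∈ Finset.Ico N (max k N), (if h : j < N then g ⟨j, h⟩ else 0) = 0 := by
      apply Finset.sum_eq_zero
      intro j hj
      rw [Finset.mem_Ico] at hj
      rw [dif_neg (by omega)]
    rw [this, add_zero, Finset.range_eq_Ico]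
  have h3 : ∑ j ∈ Finset.range N, (if h : j < N then g ⟨j, h⟩ else 0) = ∑ j : Fin N, g j := by
    rw [← Fin.sum_univ_eq_sum_range]
    apply Finset.sum_congr rfl
    intro j _
    rw [dif_pos j.isLt]
  rw [h2, h3] at h1
  exact h1

private lemma abel_lemma (N r : ℕ) (hr : r ≤ N) (τ c : ℕ → ℝ)
    (hτmono : ∀ k, τ (k+1) ≤ τ k) (hτN : τ N = 0)
    (hpref : ∀ k, (∑ j ∈ Finset.range k, c j) ≤ ((min k r : ℕ) : ℝ)) :
    ∑ j ∈ Finset.range N, τ j * c j ≤ ∑ j ∈ Finset.range r, τ j := by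
  set d : ℕ → ℝ := fun k => τ k - τ (k+1) with hd
  have hd0 : ∀ k, 0 ≤ d k := fun k => sub_nonneg.2 (hτmono k)
  have htele : ∀ a, a ≤ N → ∑ k ∈ Finset.Ico a N, d k = τ a := by
    intro a ha
    rw [tele_aux τ a N ha, hτN, sub_zero]
  have hIco : ∀ j : ℕ, Finset.Ico j N = (Finset.range N).filter (fun k => j ≤ k) := by
    intro j; ext x; simp [Finset.mem_Ico, Finset.mem_filter, and_comm]
  calc ∑ j ∈ Finset.range N, τ j * c j
      = ∑ j ∈ Finset.range N, (∑ k ∈ Finset.Ico j N, d k) * c j := by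
        apply Finset.sum_congr rfl
        intro j hj
        rw [htele j (le_of_lt (Finset.mem_range.1 hj))]
    _ = ∑ j ∈ Finset.range N, ∑ k ∈ Finset.range N, (if j ≤ k then d k * c j else 0) := by
        apply Finset.sum_congr rfl
        intro j hj
        rw [Finset.sum_mul, hIco j, Finset.sum_filter]
    _ = ∑ k ∈ Finset.range N, ∑ j ∈ Finset.range N, (if j ≤ k then d k * c j else 0) :=
        Finset.sum_comm
    _ = ∑ k ∈ Finset.range N, d k * ∑ j ∈ Finset.range (k+1), c j := by
        apply Finset.sum_congr rfl
        intro k hk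
        have hfe : (Finset.range N).filter (fun j => j ≤ k) = Finset.range (k+1) := by
          ext x
          simp only [Finset.mem_filter, Finset.mem_range]
          have := Finset.mem_range.1 hk
          omega
        rw [Finset.mul_sum, ← hfe, ← Finset.sum_filter]
    _ ≤ ∑ k ∈ Finset.range N, d k * ((min (k+1) r : ℕ) : ℝ) := by
        apply Finset.sum_le_sum
        intro k _
        exact mul_le_mul_of_nonneg_left (hpref (k+1)) (hd0 k)
    _ = ∑ k ∈ Finset.range N, ∑ j ∈ Finset.range r, (if j ≤ k then d k else 0) := by
        apply Finset.sum_congr rfl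
        intro k _
        have hfe : (Finset.range r).filter (fun j => j ≤ k) = Finset.range (min r (k+1)) := by
          ext x
          simp only [Finset.mem_filter, Finset.mem_range, lt_min_iff]
          omega
        rw [← Finset.sum_filter, hfe, Finset.sum_const, Finset.card_range, nsmul_eq_mul,
          min_comm r (k+1)]
        ring
    _ = ∑ j ∈ Finset.range r, ∑ k ∈ Finset.range N, (if j ≤ k then d k else 0) :=
        Finset.sum_comm
    _ = ∑ j ∈ Finset.range r, τ j := by
        apply Finset.sum_congr rfl
        intro j hj
        rw [← Finset.sum_filter, ← hIco j,
          htele j (le_trans (le_of_lt (Finset.mem_range.1 hj)) hr)]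

private lemma sum_dite_eq' {N m : ℕ} (hNm : N ≤ m) (g : Fin N → ℝ) :
    ∑ k : Fin m, (if h : (k : ℕ) < N then g ⟨k, h⟩ else 0) = ∑ j : Fin N, g j := by
  rw [Fin.sum_univ_eq_sum_range (fun k => if h : k < N then g ⟨k, h⟩ else 0) m,
    Finset.range_eq_Ico, ← Finset.sum_Ico_consecutive _ (Nat.zero_le N) hNm]
  have h1 : ∑ j ∈ Finset.Ico N m, (if h : j < N then g ⟨j, h⟩ else 0) = 0 := by
    apply Finset.sum_eq_zero
    intro j hj
    rw [Finset.mem_Ico] at hj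
    rw [dif_neg (by omega)]
  rw [h1, add_zero, ← Finset.range_eq_Ico, ← Fin.sum_univ_eq_sum_range]
  apply Finset.sum_congr rfl
  intro j _
  rw [dif_pos j.isLt]

private lemma svd_key (m n : ℕ) (σ : Fin (min m n) → ℝ) (f : Fin m → Fin n → ℝ) :
    ∑ k : Fin m, ∑ l : Fin n, svdDiag m n σ k l * f k l
      = ∑ j : Fin (min m n), σ j *
          f ⟨j, lt_of_lt_of_le j.isLt (min_le_left m n)⟩
            ⟨j, lt_of_lt_of_le j.isLt (min_le_right m n)⟩ := by
  have inner : ∀ k : Fin m, ∑ l : Fin n, svdDiag m n σ k l * f k l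
      = if h : (k : ℕ) < min m n then
          σ ⟨k, h⟩ * f k ⟨(k : ℕ), lt_of_lt_of_le h (min_le_right m n)⟩ else 0 := by
    intro k
    split
    · next h =>
      have hl : ((⟨(k : ℕ), lt_of_lt_of_le h (min_le_right m n)⟩ : Fin n)) ∈ (Finset.univ : Finset (Fin n)) :=
        Finset.mem_univ _
      rw [Finset.sum_eq_single_of_mem _ hl]
      · have : svdDiag m n σ k ⟨(k : ℕ), lt_of_lt_of_le h (min_le_right m n)⟩ = σ ⟨k, h⟩ := by
          rw [svdDiag]
          simp only [Matrix.of_apply]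
          rw [dif_pos ⟨trivial, h⟩]
        rw [this]
      · intro l _ hne
        have : svdDiag m n σ k l = 0 := by
          rw [svdDiag]
          simp only [Matrix.of_apply]
          rw [dif_neg]
          intro hcon
          exact hne (Fin.ext hcon.1.symm)
        rw [this, zero_mul]
    · next h =>
      apply Finset.sum_eq_zero
      intro l _
      have : svdDiag m n σ k l = 0 := by
        rw [svdDiag]
        simp only [Matrix.of_apply]
        rw [dif_neg]
        intro hcon
        exact h hcon.2
      rw [this, zero_mul]
  rw [Finset.sum_congr rfl (fun k _ => inner k)]
  have hs := sum_dite_eq' (m := m) (min_le_left m n)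
    (fun j : Fin (min m n) => σ j * f ⟨j, lt_of_lt_of_le j.isLt (min_le_left m n)⟩
        ⟨j, lt_of_lt_of_le j.isLt (min_le_right m n)⟩)
  rw [← hs]

private lemma trace_form (m n r : ℕ) (σ : Fin (min m n) → ℝ)
    (P : Matrix (Fin r) (Fin m) ℝ) (Q : Matrix (Fin r) (Fin n) ℝ) :
    (P * svdDiag m n σ * Qᵀ).trace
      = ∑ j : Fin (min m n), σ j *
          ∑ i : Fin r, P i ⟨j, lt_of_lt_of_le j.isLt (min_le_left m n)⟩
            * Q i ⟨j, lt_of_lt_of_le j.isLt (min_le_right m n)⟩ := by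
  have e0 : (P * svdDiag m n σ * Qᵀ).trace
      = ∑ i : Fin r, ∑ l : Fin n, ∑ k : Fin m, P i k * svdDiag m n σ k l * Q i l := by
    simp only [Matrix.trace, Matrix.diag, Matrix.mul_apply, Matrix.transpose_apply,
      Finset.sum_mul]
  rw [e0]
  rw [← svd_key m n σ (fun k l => ∑ i : Fin r, P i k * Q i l)]
  calc ∑ i : Fin r, ∑ l : Fin n, ∑ k : Fin m, P i k * svdDiag m n σ k l * Q i l
      = ∑ i : Fin r, ∑ k : Fin m, ∑ l : Fin n, P i k * svdDiag m n σ k l * Q i l :=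
        Finset.sum_congr rfl (fun _ _ => Finset.sum_comm)
    _ = ∑ k : Fin m, ∑ i : Fin r, ∑ l : Fin n, P i k * svdDiag m n σ k l * Q i l :=
        Finset.sum_comm
    _ = ∑ k : Fin m, ∑ l : Fin n, ∑ i : Fin r, P i k * svdDiag m n σ k l * Q i l :=
        Finset.sum_congr rfl (fun _ _ => Finset.sum_comm)
    _ = ∑ k : Fin m, ∑ l : Fin n, svdDiag m n σ k l * ∑ i : Fin r, P i k * Q i l := by
        apply Finset.sum_congr rfl
        intro k _
        apply Finset.sum_congr rfl
        intro l _
        rw [Finset.mul_sum]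
        apply Finset.sum_congr rfl
        intro i _
        ring

private lemma col_bound {r m : ℕ} (P : Matrix (Fin r) (Fin m) ℝ) (hP : P * Pᵀ = 1)
    (k : Fin m) : ∑ i : Fin r, P i k * P i k ≤ 1 := by
  have h1 : Pᵀ * P * (Pᵀ * P) = Pᵀ * P := by
    have h : Pᵀ * P * (Pᵀ * P) = Pᵀ * ((P * Pᵀ) * P) := by
      simp only [Matrix.mul_assoc]
    rw [h, hP, Matrix.one_mul]
  have h2 := congrFun (congrFun h1 k) k
  simp only [Matrix.mul_apply, Matrix.transpose_apply] at h2
  -- h2 : ∑ c, (∑ i, P i k * P i c) * (∑ i, P i c * P i k) = ∑ i, P i k * P i k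
  have h4 : ∀ c : Fin m, (∑ i : Fin r, P i c * P i k) = ∑ i : Fin r, P i k * P i c :=
    fun c => Finset.sum_congr rfl (fun i _ => mul_comm _ _)
  rw [Finset.sum_congr rfl (fun c _ => by rw [h4 c])] at h2
  have h5 : (∑ i : Fin r, P i k * P i k) * (∑ i : Fin r, P i k * P i k)
      ≤ ∑ c : Fin m, (∑ i : Fin r, P i k * P i c) * (∑ i : Fin r, P i k * P i c) :=
    Finset.single_le_sum (f := fun c => (∑ i : Fin r, P i k * P i c) * (∑ i : Fin r, P i k * P i c))
      (fun c _ => mul_self_nonneg _) (Finset.mem_univ k)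
  have h0 : 0 ≤ ∑ i : Fin r, P i k * P i k :=
    Finset.sum_nonneg (fun i _ => mul_self_nonneg _)
  nlinarith [h2, h5, h0]

private lemma col_sum {r m : ℕ} (P : Matrix (Fin r) (Fin m) ℝ) (hP : P * Pᵀ = 1) :
    ∑ k : Fin m, ∑ i : Fin r, P i k * P i k = (r : ℝ) := by
  have hdiag : ∀ i : Fin r, ∑ k : Fin m, P i k * P i k = 1 := by
    intro i
    have h2 := congrFun (congrFun hP i) i
    simpa [Matrix.mul_apply, Matrix.transpose_apply, Matrix.one_apply] using h2
  rw [Finset.sum_comm, Finset.sum_congr rfl (fun i _ => hdiag i)]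
  simp

private lemma sum_comp_le {N m : ℕ} (hNm : N ≤ m) (s : Fin m → ℝ) (hs : ∀ k, 0 ≤ s k) :
    ∑ j : Fin N, s ⟨j, lt_of_lt_of_le j.isLt hNm⟩ ≤ ∑ k : Fin m, s k := by
  rw [← sum_dite_eq' hNm (fun j => s ⟨j, lt_of_lt_of_le j.isLt hNm⟩)]
  apply Finset.sum_le_sum
  intro k _
  split
  · next h => exact le_of_eq (congrArg s (Fin.ext rfl))
  · exact hs k

private lemma ub_lemma (m n r : ℕ) (hr : r ≤ min m n) (σ : Fin (min m n) → ℝ)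
    (hσ : Antitone σ) (hσ0 : ∀ j, 0 ≤ σ j)
    (P : Matrix (Fin r) (Fin m) ℝ) (Q : Matrix (Fin r) (Fin n) ℝ)
    (hP : P * Pᵀ = 1) (hQ : Q * Qᵀ = 1) :
    (P * svdDiag m n σ * Qᵀ).trace
      ≤ ∑ j ∈ univ.filter (fun j : Fin (min m n) => (j : ℕ) < r), σ j := by
  have hNm := min_le_left m n
  have hNn := min_le_right m n
  set s : Fin m → ℝ := fun k => ∑ i : Fin r, P i k * P i k with hsdef
  set t : Fin n → ℝ := fun l => ∑ i : Fin r, Q i l * Q i l with htdef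
  have hs0 : ∀ k, 0 ≤ s k := fun k => Finset.sum_nonneg (fun i _ => mul_self_nonneg _)
  have ht0 : ∀ l, 0 ≤ t l := fun l => Finset.sum_nonneg (fun i _ => mul_self_nonneg _)
  have hs1 : ∀ k, s k ≤ 1 := fun k => col_bound P hP k
  have ht1 : ∀ l, t l ≤ 1 := fun l => col_bound Q hQ l
  set c : Fin (min m n) → ℝ := fun j =>
    ∑ i : Fin r, P i ⟨j, lt_of_lt_of_le j.isLt hNm⟩ * Q i ⟨j, lt_of_lt_of_le j.isLt hNn⟩
    with hcdef
  have hc1 : ∀ j, c j ≤ 1 := by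
    intro j
    have hcs := Finset.sum_mul_sq_le_sq_mul_sq Finset.univ
      (fun i : Fin r => P i ⟨j, lt_of_lt_of_le j.isLt hNm⟩)
      (fun i : Fin r => Q i ⟨j, lt_of_lt_of_le j.isLt hNn⟩)
    have e1 : (∑ i : Fin r, (P i ⟨j, lt_of_lt_of_le j.isLt hNm⟩) ^ 2)
        = s ⟨j, lt_of_lt_of_le j.isLt hNm⟩ := by
      simp only [hsdef]
      exact Finset.sum_congr rfl (fun i _ => sq (P i _))
    have e2 : (∑ i : Fin r, (Q i ⟨j, lt_of_lt_of_le j.isLt hNn⟩) ^ 2)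
        = t ⟨j, lt_of_lt_of_le j.isLt hNn⟩ := by
      simp only [htdef]
      exact Finset.sum_congr rfl (fun i _ => sq (Q i _))
    rw [e1, e2] at hcs
    have hst : s ⟨j, lt_of_lt_of_le j.isLt hNm⟩ * t ⟨j, lt_of_lt_of_le j.isLt hNn⟩ ≤ 1 :=
      mul_le_one₀ (hs1 _) (ht0 _) (ht1 _)
    nlinarith [hcs, hst, sq_nonneg (c j - 1)]
  have h2c : ∀ j, 2 * c j ≤ s ⟨j, lt_of_lt_of_le j.isLt hNm⟩ + t ⟨j, lt_of_lt_of_le j.isLt hNn⟩ := by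
    intro j
    have hnn : (0:ℝ) ≤ ∑ i : Fin r,
        (P i ⟨j, lt_of_lt_of_le j.isLt hNm⟩ - Q i ⟨j, lt_of_lt_of_le j.isLt hNn⟩) ^ 2 :=
      Finset.sum_nonneg (fun i _ => sq_nonneg _)
    have hex : ∑ i : Fin r,
        (P i ⟨j, lt_of_lt_of_le j.isLt hNm⟩ - Q i ⟨j, lt_of_lt_of_le j.isLt hNn⟩) ^ 2
        = s ⟨j, lt_of_lt_of_le j.isLt hNm⟩ + t ⟨j, lt_of_lt_of_le j.isLt hNn⟩ - 2 * c j := by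
      simp only [hsdef, htdef, hcdef]
      rw [← Finset.sum_add_distrib, Finset.mul_sum, ← Finset.sum_sub_distrib]
      apply Finset.sum_congr rfl
      intro i _
      ring
    linarith [hex ▸ hnn]
  set τ : ℕ → ℝ := fun k => if h : k < min m n then σ ⟨k, h⟩ else 0 with hτdef
  set cc : ℕ → ℝ := fun k => if h : k < min m n then c ⟨k, h⟩ else 0 with hccdef
  have hτmono : ∀ k, τ (k+1) ≤ τ k := by
    intro k
    simp only [hτdef]
    by_cases h1 : k + 1 < min m n
    · rw [dif_pos h1, dif_pos (Nat.lt_of_succ_lt h1)]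
      exact hσ (Fin.mk_le_mk.2 (Nat.le_succ k))
    · rw [dif_neg h1]
      by_cases h2 : k < min m n
      · rw [dif_pos h2]; exact hσ0 _
      · rw [dif_neg h2]
  have hτN : τ (min m n) = 0 := by simp only [hτdef]; exact dif_neg (lt_irrefl _)
  have hpref : ∀ k, (∑ j ∈ Finset.range k, cc j) ≤ ((min k r : ℕ) : ℝ) := by
    intro k
    have b1 : (∑ j ∈ Finset.range k, cc j) ≤ (k : ℝ) := by
      calc ∑ j ∈ Finset.range k, cc j ≤ ∑ _j ∈ Finset.range k, (1:ℝ) := by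
            apply Finset.sum_le_sum
            intro j _
            simp only [hccdef]
            split
            · exact hc1 _
            · exact zero_le_one
        _ = (k : ℝ) := by simp
    have b2 : (∑ j ∈ Finset.range k, cc j) ≤ (r : ℝ) := by
      have step : ∀ j ∈ Finset.range k, cc j ≤
          ((if h : j < min m n then s ⟨j, lt_of_lt_of_le h hNm⟩ else 0)
            + (if h : j < min m n then t ⟨j, lt_of_lt_of_le h hNn⟩ else 0)) / 2 := by
        intro j _
        simp only [hccdef]
        by_cases h : j < min m n
        · rw [dif_pos h, dif_pos h, dif_pos h]
          have := h2c ⟨j, h⟩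
          linarith [this]
        · rw [dif_neg h, dif_neg h, dif_neg h]
          norm_num
      have hss : (∑ j ∈ Finset.range k, (if h : j < min m n then s ⟨j, lt_of_lt_of_le h hNm⟩ else 0))
          ≤ (r : ℝ) := by
        calc _ ≤ ∑ j : Fin (min m n), s ⟨j, lt_of_lt_of_le j.isLt hNm⟩ :=
              sum_dite_le k _ (fun j => hs0 _)
          _ ≤ ∑ k' : Fin m, s k' := sum_comp_le hNm s hs0
          _ = (r : ℝ) := col_sum P hP
      have htt : (∑ j ∈ Finset.range k, (if h : j < min m n then t ⟨j, lt_of_lt_of_le h hNn⟩ else 0))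
          ≤ (r : ℝ) := by
        calc _ ≤ ∑ j : Fin (min m n), t ⟨j, lt_of_lt_of_le j.isLt hNn⟩ :=
              sum_dite_le k _ (fun j => ht0 _)
          _ ≤ ∑ l : Fin n, t l := sum_comp_le hNn t ht0
          _ = (r : ℝ) := col_sum Q hQ
      calc ∑ j ∈ Finset.range k, cc j
          ≤ ∑ j ∈ Finset.range k,
            (((if h : j < min m n then s ⟨j, lt_of_lt_of_le h hNm⟩ else 0)
              + (if h : j < min m n then t ⟨j, lt_of_lt_of_le h hNn⟩ else 0)) / 2) :=
            Finset.sum_le_sum step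
        _ = ((∑ j ∈ Finset.range k, (if h : j < min m n then s ⟨j, lt_of_lt_of_le h hNm⟩ else 0))
              + ∑ j ∈ Finset.range k, (if h : j < min m n then t ⟨j, lt_of_lt_of_le h hNn⟩ else 0)) / 2 := by
            rw [← Finset.sum_add_distrib, ← Finset.sum_div]
        _ ≤ ((r : ℝ) + (r : ℝ)) / 2 := by linarith [hss, htt]
        _ = (r : ℝ) := by ring
    rw [Nat.cast_min]
    exact le_min b1 b2
  have key := abel_lemma (min m n) r hr τ cc hτmono hτN hpref
  rw [trace_form]
  have conv1 : (∑ j : Fin (min m n), σ j *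
      ∑ i : Fin r, P i ⟨j, lt_of_lt_of_le j.isLt (min_le_left m n)⟩
        * Q i ⟨j, lt_of_lt_of_le j.isLt (min_le_right m n)⟩)
      = ∑ j ∈ Finset.range (min m n), τ j * cc j := by
    rw [← Fin.sum_univ_eq_sum_range (fun k => τ k * cc k) (min m n)]
    apply Finset.sum_congr rfl
    intro j _
    simp only [hτdef, hccdef, dif_pos j.isLt, hcdef, Fin.eta]
  have conv2 : (∑ j ∈ univ.filter (fun j : Fin (min m n) => (j : ℕ) < r), σ j)
      = ∑ j ∈ Finset.range r, τ j := by
    rw [Finset.sum_filter]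
    rw [show (∑ a : Fin (min m n), if (a : ℕ) < r then σ a else 0)
        = ∑ a : Fin (min m n),
          (fun k => if h : k < min m n then (if k < r then σ ⟨k, h⟩ else 0) else 0) (a : ℕ) from
      Finset.sum_congr rfl (fun a _ => by simp only [dif_pos a.isLt])]
    rw [Fin.sum_univ_eq_sum_range
      (fun k => if h : k < min m n then (if k < r then σ ⟨k, h⟩ else 0) else 0) (min m n)]
    have e : ∀ j ∈ Finset.range (min m n),
        (if h : j < min m n then (if j < r then σ ⟨j, h⟩ else 0) else 0)
          = if j < r then τ j else 0 := by
      intro j hj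
      have hjN := Finset.mem_range.1 hj
      rw [dif_pos hjN]
      simp only [hτdef]
      by_cases hjr : j < r
      · rw [if_pos hjr, if_pos hjr, dif_pos hjN]
      · rw [if_neg hjr, if_neg hjr]
    rw [Finset.sum_congr rfl e, ← Finset.sum_filter]
    have hfr : (Finset.range (min m n)).filter (fun j => j < r) = Finset.range r := by
      ext x
      simp only [Finset.mem_filter, Finset.mem_range]
      omega
    rw [hfr]
  rw [conv1, conv2]
  exact key

/-- the truncated nuclear norm Σ_{j>r} σ_j equals the nuclear
norm minus the maximum of tr(A X Bᵀ) over row-orthonormal A and B, the maximum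
being attained. -/
theorem truncated_nuclear_norm_eq (m n r : ℕ) (hr : r ≤ min m n)
    (X : Matrix (Fin m) (Fin n) ℝ)
    (U : Matrix (Fin m) (Fin m) ℝ) (V : Matrix (Fin n) (Fin n) ℝ)
    (σ : Fin (min m n) → ℝ) (hσ : Antitone σ) (hσ0 : ∀ j, 0 ≤ σ j)
    (hU : U * Uᵀ = 1) (hU' : Uᵀ * U = 1)
    (hV : V * Vᵀ = 1) (hV' : Vᵀ * V = 1)
    (hX : X = U * svdDiag m n σ * Vᵀ) :
    IsGreatest
      {y : ℝ | ∃ (A : Matrix (Fin r) (Fin m) ℝ) (B : Matrix (Fin r) (Fin n) ℝ),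
        A * Aᵀ = 1 ∧ B * Bᵀ = 1 ∧ y = (A * X * Bᵀ).trace}
      ((∑ j : Fin (min m n), σ j) -
        ∑ j ∈ univ.filter (fun j : Fin (min m n) => r ≤ (j : ℕ)), σ j) := by
  have hNm := min_le_left m n
  have hNn := min_le_right m n
  have hrm : r ≤ m := le_trans hr hNm
  have hrn : r ≤ n := le_trans hr hNn
  have hval : ((∑ j : Fin (min m n), σ j) -
      ∑ j ∈ univ.filter (fun j : Fin (min m n) => r ≤ (j : ℕ)), σ j)
      = ∑ j ∈ univ.filter (fun j : Fin (min m n) => (j : ℕ) < r), σ j := by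
    have h := Finset.sum_filter_add_sum_filter_not (univ : Finset (Fin (min m n)))
      (fun j => r ≤ (j : ℕ)) σ
    have h2 : (univ : Finset (Fin (min m n))).filter (fun j : Fin (min m n) => ¬ r ≤ (j : ℕ))
        = univ.filter (fun j : Fin (min m n) => (j : ℕ) < r) := by
      apply Finset.filter_congr
      intro j _
      simp [Nat.not_le]
    rw [h2] at h
    linarith
  constructor
  · -- membership
    set A₀ : Matrix (Fin r) (Fin m) ℝ :=
      Matrix.of fun i k => U k ⟨i, lt_of_lt_of_le i.isLt hrm⟩ with hA₀def
    set B₀ : Matrix (Fin r) (Fin n) ℝ :=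
      Matrix.of fun i l => V l ⟨i, lt_of_lt_of_le i.isLt hrn⟩ with hB₀def
    have hA₀ : A₀ * A₀ᵀ = 1 := by
      ext i i'
      have h := congrFun (congrFun hU' (⟨i, lt_of_lt_of_le i.isLt hrm⟩ : Fin m))
        ⟨i', lt_of_lt_of_le i'.isLt hrm⟩
      simp only [Matrix.mul_apply, Matrix.transpose_apply, Matrix.one_apply] at h ⊢
      simp only [hA₀def, Matrix.of_apply]
      rw [h]
      simp only [Fin.mk.injEq, Fin.val_inj]
    have hB₀ : B₀ * B₀ᵀ = 1 := by
      ext i i'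
      have h := congrFun (congrFun hV' (⟨i, lt_of_lt_of_le i.isLt hrn⟩ : Fin n))
        ⟨i', lt_of_lt_of_le i'.isLt hrn⟩
      simp only [Matrix.mul_apply, Matrix.transpose_apply, Matrix.one_apply] at h ⊢
      simp only [hB₀def, Matrix.of_apply]
      rw [h]
      simp only [Fin.mk.injEq, Fin.val_inj]
    refine ⟨A₀, B₀, hA₀, hB₀, ?_⟩
    have hPind : ∀ (i : Fin r) (k : Fin m), (A₀ * U) i k
        = if (⟨(i : ℕ), lt_of_lt_of_le i.isLt hrm⟩ : Fin m) = k then 1 else 0 := by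
      intro i k
      have h := congrFun (congrFun hU' (⟨i, lt_of_lt_of_le i.isLt hrm⟩ : Fin m)) k
      simp only [Matrix.mul_apply, Matrix.transpose_apply, Matrix.one_apply] at h
      simp only [hA₀def, Matrix.mul_apply, Matrix.of_apply]
      exact h
    have hQind : ∀ (i : Fin r) (l : Fin n), (B₀ * V) i l
        = if (⟨(i : ℕ), lt_of_lt_of_le i.isLt hrn⟩ : Fin n) = l then 1 else 0 := by
      intro i l
      have h := congrFun (congrFun hV' (⟨i, lt_of_lt_of_le i.isLt hrn⟩ : Fin n)) l
      simp only [Matrix.mul_apply, Matrix.transpose_apply, Matrix.one_apply] at h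
      simp only [hB₀def, Matrix.mul_apply, Matrix.of_apply]
      exact h
    have hfac : A₀ * X * B₀ᵀ = (A₀ * U) * svdDiag m n σ * (B₀ * V)ᵀ := by
      rw [hX]
      simp only [Matrix.transpose_mul, Matrix.mul_assoc]
    rw [hfac, trace_form, hval]
    have hterm : ∀ j : Fin (min m n),
        (∑ i : Fin r, (A₀ * U) i ⟨j, lt_of_lt_of_le j.isLt (min_le_left m n)⟩
          * (B₀ * V) i ⟨j, lt_of_lt_of_le j.isLt (min_le_right m n)⟩)
        = if (j : ℕ) < r then 1 else 0 := by
      intro j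
      by_cases hjr : (j : ℕ) < r
      · rw [Finset.sum_eq_single_of_mem (⟨(j : ℕ), hjr⟩ : Fin r) (Finset.mem_univ _)]
        · rw [hPind, hQind, if_pos (Fin.ext rfl), if_pos (Fin.ext rfl), one_mul, if_pos hjr]
        · intro i _ hne
          rw [hPind, if_neg, zero_mul]
          intro hcon
          exact hne (Fin.ext (by simpa using congrArg Fin.val hcon))
      · rw [if_neg hjr]
        apply Finset.sum_eq_zero
        intro i _
        rw [hPind, if_neg, zero_mul]
        intro hcon
        have hiv : (i : ℕ) = (j : ℕ) := by simpa using congrArg Fin.val hcon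
        exact hjr (hiv ▸ i.isLt)
    rw [Finset.sum_filter]
    apply Finset.sum_congr rfl
    intro j _
    rw [hterm j]
    by_cases hjr : ((j : ℕ) < r) <;> simp [hjr]
  · -- upper bound
    rintro y ⟨A, B, hA, hB, hy⟩
    have hPP : (A * U) * (A * U)ᵀ = 1 := by
      rw [Matrix.transpose_mul, Matrix.mul_assoc, ← Matrix.mul_assoc U Uᵀ Aᵀ, hU,
        Matrix.one_mul, hA]
    have hQQ : (B * V) * (B * V)ᵀ = 1 := by
      rw [Matrix.transpose_mul, Matrix.mul_assoc, ← Matrix.mul_assoc V Vᵀ Bᵀ, hV,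
        Matrix.one_mul, hB]
    have hfac : A * X * Bᵀ = (A * U) * svdDiag m n σ * (B * V)ᵀ := by
      rw [hX]
      simp only [Matrix.transpose_mul, Matrix.mul_assoc]
    rw [hy, hfac, hval]
    exact ub_lemma m n r hr σ hσ hσ0 (A * U) (B * V) hPP hQQ
end

section
/- For row-orthonormal matrices A ∈ ℝ^{r×m} (A A^T = I_r) and B ∈ ℝ^{r×n} (B B^T = I_r) and any X ∈ ℝ^{m×n}, tr(A X B^T) ≤ Σ_{j=1}^{r} σ_j(X), the sum of the r largest singular values of X. -/
open Matrix Finset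

/-- Combinatorial lemma: weighted sum with weights in [0,1] summing to ≤ r. -/
lemma sum_aux (N r : ℕ) (σ a : Fin N → ℝ) (hσ : Antitone σ) (hσ0 : ∀ l, 0 ≤ σ l)
    (ha0 : ∀ l, 0 ≤ a l) (ha1 : ∀ l, a l ≤ 1) (hsum : ∑ l, a l ≤ r) :
    ∑ l, σ l * a l ≤ ∑ l ∈ univ.filter (fun l : Fin N => (l : ℕ) < r), σ l := by
  rcases lt_or_ge r N with hr | hr
  · set τ : ℝ := σ ⟨r, hr⟩ with hτ
    have hcard : (univ.filter fun l : Fin N => (l : ℕ) < r).card = r := by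
      have : (univ.filter fun l : Fin N => (l : ℕ) < r) = Finset.Iio ⟨r, hr⟩ := by
        ext l; simp [Fin.lt_def]
      rw [this, Fin.card_Iio]
    have key : ∀ l : Fin N, σ l * a l ≤
        (if (l : ℕ) < r then σ l else 0) + τ * (a l - if (l : ℕ) < r then 1 else 0) := by
      intro l
      by_cases h : (l : ℕ) < r
      · have hτl : τ ≤ σ l := hσ (by simp [Fin.le_def, h.le])
        simp only [if_pos h]
        nlinarith [ha1 l]
      · have hlτ : σ l ≤ τ := hσ (by simp [Fin.le_def]; omega)
        simp only [if_neg h]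
        nlinarith [ha0 l, hσ0 l]
    calc ∑ l : Fin N, σ l * a l
        ≤ ∑ l : Fin N, ((if (l : ℕ) < r then σ l else 0)
            + τ * (a l - if (l : ℕ) < r then 1 else 0)) :=
          Finset.sum_le_sum fun l _ => key l
      _ = (∑ l ∈ univ.filter (fun l : Fin N => (l : ℕ) < r), σ l)
            + τ * ((∑ l : Fin N, a l) - r) := by
          rw [Finset.sum_add_distrib, ← Finset.mul_sum, Finset.sum_sub_distrib]
          congr 1
          · exact (Finset.sum_filter _ _).symm
          · congr 2
            rw [Finset.sum_boole, hcard]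
      _ ≤ ∑ l ∈ univ.filter (fun l : Fin N => (l : ℕ) < r), σ l := by
          have hτ0 : 0 ≤ τ := hσ0 _
          nlinarith
  · have hfil : (univ.filter fun l : Fin N => (l : ℕ) < r) = univ := by
      ext l; simp; omega
    rw [hfil]
    exact Finset.sum_le_sum fun l _ => by nlinarith [ha0 l, ha1 l, hσ0 l]

/-- Trace of P * D * Qᵀ as a sum over the diagonal. -/
lemma trace_svdDiag (m n r : ℕ) (σ : Fin (min m n) → ℝ)
    (P : Matrix (Fin r) (Fin m) ℝ) (Q : Matrix (Fin r) (Fin n) ℝ) :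
    (P * svdDiag m n σ * Qᵀ).trace =
      ∑ l : Fin (min m n), σ l * ∑ i, P i (Fin.castLE (min_le_left m n) l)
        * Q i (Fin.castLE (min_le_right m n) l) := by
  have expand : (P * svdDiag m n σ * Qᵀ).trace =
      ∑ k : Fin m, ∑ j : Fin n, svdDiag m n σ k j * ∑ i, P i k * Q i j := by
    calc (P * svdDiag m n σ * Qᵀ).trace
        = ∑ i : Fin r, ∑ j : Fin n, ∑ k : Fin m,
            P i k * svdDiag m n σ k j * Q i j := by
          simp only [trace, diag_apply, mul_apply, transpose_apply, Finset.sum_mul]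
      _ = ∑ j : Fin n, ∑ i : Fin r, ∑ k : Fin m,
            P i k * svdDiag m n σ k j * Q i j := Finset.sum_comm
      _ = ∑ j : Fin n, ∑ k : Fin m, ∑ i : Fin r,
            P i k * svdDiag m n σ k j * Q i j :=
          Finset.sum_congr rfl fun _ _ => Finset.sum_comm
      _ = ∑ k : Fin m, ∑ j : Fin n, ∑ i : Fin r,
            P i k * svdDiag m n σ k j * Q i j := Finset.sum_comm
      _ = ∑ k : Fin m, ∑ j : Fin n, svdDiag m n σ k j * ∑ i, P i k * Q i j := by
          refine Finset.sum_congr rfl fun k _ => Finset.sum_congr rfl fun j _ => ?_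
          rw [Finset.mul_sum]
          exact Finset.sum_congr rfl fun i _ => by ring
  rw [expand]
  set g : Fin m → ℝ := fun k =>
    if h : (k : ℕ) < min m n then
      σ ⟨k, h⟩ * ∑ i, P i k * Q i ⟨k, lt_of_lt_of_le h (min_le_right m n)⟩ else 0 with hg
  have step1 : ∀ k : Fin m, (∑ j : Fin n, svdDiag m n σ k j * ∑ i, P i k * Q i j) = g k := by
    intro k
    by_cases h : (k : ℕ) < min m n
    · rw [hg]; simp only [dif_pos h]
      rw [Finset.sum_eq_single (⟨(k : ℕ), lt_of_lt_of_le h (min_le_right m n)⟩ : Fin n)]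
      · have hD : svdDiag m n σ k ⟨(k : ℕ), lt_of_lt_of_le h (min_le_right m n)⟩
            = σ ⟨(k : ℕ), h⟩ := dif_pos ⟨rfl, h⟩
        rw [hD]
      · intro b _ hb
        have hD : svdDiag m n σ k b = 0 :=
          dif_neg (by rintro ⟨heq, -⟩; exact hb (Fin.ext heq.symm))
        rw [hD, zero_mul]
      · intro h'; exact absurd (Finset.mem_univ _) h'
    · rw [hg]; simp only [dif_neg h]
      apply Finset.sum_eq_zero
      intro j _
      have hD : svdDiag m n σ k j = 0 :=
        dif_neg (by rintro ⟨-, hlt⟩; exact h hlt)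
      rw [hD, zero_mul]
  rw [Finset.sum_congr rfl fun k _ => step1 k]
  -- restrict sum to the image of castLE
  have hinj : Function.Injective (Fin.castLE (min_le_left m n)) := Fin.castLE_injective _
  have h1 : ∑ k : Fin m, g k
      = ∑ k ∈ Finset.image (Fin.castLE (min_le_left m n)) univ, g k := by
    symm
    apply Finset.sum_subset (Finset.subset_univ _)
    intro k _ hk
    exact dif_neg fun h =>
      hk (Finset.mem_image.mpr ⟨⟨(k : ℕ), h⟩, Finset.mem_univ _, Fin.ext rfl⟩)
  have h2 : ∑ k ∈ Finset.image (Fin.castLE (min_le_left m n)) univ, g k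
      = ∑ l : Fin (min m n), g (Fin.castLE (min_le_left m n) l) :=
    Finset.sum_image (fun x _ y _ h => hinj h)
  rw [h1, h2]
  exact Finset.sum_congr rfl fun l _ => dif_pos l.isLt

/-- Diagonal entries of PᵀP are at most 1 when PPᵀ = 1. -/
lemma diag_le_one {r m : ℕ} (P : Matrix (Fin r) (Fin m) ℝ) (hP : P * Pᵀ = 1) (k : Fin m) :
    ∑ i, (P i k) ^ 2 ≤ 1 := by
  set M : Matrix (Fin m) (Fin m) ℝ := Pᵀ * P with hM
  have hidem : M * M = M := by
    rw [hM, Matrix.mul_assoc, ← Matrix.mul_assoc P, hP, Matrix.one_mul]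
  have hsym : ∀ a b, M a b = M b a := by
    intro a b; simp [hM, mul_apply, mul_comm]
  have hMkk : M k k = ∑ i, (P i k) ^ 2 := by
    simp [hM, mul_apply, sq]
  have hMM : M k k = ∑ j, (M k j) ^ 2 := by
    conv_lhs => rw [← hidem]
    simp only [mul_apply, sq]
    exact Finset.sum_congr rfl fun j _ => by rw [hsym j k]
  have h1 : (M k k) ^ 2 ≤ ∑ j, (M k j) ^ 2 :=
    Finset.single_le_sum (f := fun j => (M k j) ^ 2) (fun j _ => sq_nonneg _)
      (Finset.mem_univ k)
  have h2 : 0 ≤ M k k := by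
    rw [hMkk]
    exact Finset.sum_nonneg fun i _ => sq_nonneg _
  nlinarith [hMM, hMkk, h1, h2]

/-- Sum of squared column norms over an injection is at most r. -/
lemma sum_cols_le {r m N : ℕ} (P : Matrix (Fin r) (Fin m) ℝ) (hP : P * Pᵀ = 1)
    (e : Fin N → Fin m) (he : Function.Injective e) :
    ∑ l : Fin N, ∑ i, (P i (e l)) ^ 2 ≤ r := by
  have h1 : ∑ l : Fin N, ∑ i, (P i (e l)) ^ 2 ≤ ∑ k : Fin m, ∑ i, (P i k) ^ 2 := by
    rw [← Finset.sum_image (f := fun k => ∑ i, (P i k) ^ 2) (g := e)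
      (fun x _ y _ h => he h)]
    apply Finset.sum_le_sum_of_subset_of_nonneg (Finset.subset_univ _)
    intro k _ _
    exact Finset.sum_nonneg fun i _ => sq_nonneg _
  have h2 : ∑ k : Fin m, ∑ i : Fin r, (P i k) ^ 2 = r := by
    rw [Finset.sum_comm]
    have : ∀ i : Fin r, ∑ k : Fin m, (P i k) ^ 2 = 1 := by
      intro i
      have := congrArg (fun M => M i i) hP
      simpa [mul_apply, sq] using this
    rw [Finset.sum_congr rfl fun i _ => this i]
    simp
  linarith

/-- for row-orthonormal A and B, tr(A X Bᵀ) is at most the sum of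
the r largest singular values of X. -/
theorem trace_AXBt_le_sum_largest_singular_values (m n r : ℕ)
    (X : Matrix (Fin m) (Fin n) ℝ)
    (U : Matrix (Fin m) (Fin m) ℝ) (V : Matrix (Fin n) (Fin n) ℝ)
    (σ : Fin (min m n) → ℝ) (hσ : Antitone σ) (hσ0 : ∀ j, 0 ≤ σ j)
    (hU : U * Uᵀ = 1) (hU' : Uᵀ * U = 1)
    (hV : V * Vᵀ = 1) (hV' : Vᵀ * V = 1)
    (hX : X = U * svdDiag m n σ * Vᵀ)
    (A : Matrix (Fin r) (Fin m) ℝ) (B : Matrix (Fin r) (Fin n) ℝ)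
    (hA : A * Aᵀ = 1) (hB : B * Bᵀ = 1) :
    (A * X * Bᵀ).trace ≤
      ∑ j ∈ univ.filter (fun j : Fin (min m n) => (j : ℕ) < r), σ j := by
  set P : Matrix (Fin r) (Fin m) ℝ := A * U with hPdef
  set Q : Matrix (Fin r) (Fin n) ℝ := B * V with hQdef
  have hP : P * Pᵀ = 1 := by
    rw [hPdef, transpose_mul, Matrix.mul_assoc, ← Matrix.mul_assoc U, hU,
      Matrix.one_mul, hA]
  have hQ : Q * Qᵀ = 1 := by
    rw [hQdef, transpose_mul, Matrix.mul_assoc, ← Matrix.mul_assoc V, hV,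
      Matrix.one_mul, hB]
  have hrw : A * X * Bᵀ = P * svdDiag m n σ * Qᵀ := by
    rw [hX, hPdef, hQdef, transpose_mul]
    simp only [Matrix.mul_assoc]
  rw [hrw, trace_svdDiag]
  set em : Fin (min m n) → Fin m := Fin.castLE (min_le_left m n) with hem
  set en : Fin (min m n) → Fin n := Fin.castLE (min_le_right m n) with hen
  set a : Fin (min m n) → ℝ :=
    fun l => ((∑ i, (P i (em l)) ^ 2) + (∑ i, (Q i (en l)) ^ 2)) / 2 with ha
  have hca : ∀ l, (∑ i, P i (em l) * Q i (en l)) ≤ a l := by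
    intro l
    rw [ha]
    have : ∀ i : Fin r, P i (em l) * Q i (en l) ≤ ((P i (em l))^2 + (Q i (en l))^2)/2 := by
      intro i; nlinarith [sq_nonneg (P i (em l) - Q i (en l))]
    calc (∑ i, P i (em l) * Q i (en l))
        ≤ ∑ i, ((P i (em l))^2 + (Q i (en l))^2)/2 := Finset.sum_le_sum fun i _ => this i
      _ = _ := by rw [← Finset.sum_div, Finset.sum_add_distrib]
  have ha0 : ∀ l, 0 ≤ a l := by
    intro l; rw [ha]
    have h1 := Finset.sum_nonneg fun i (_ : i ∈ univ) => sq_nonneg (P i (em l))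
    have h2 := Finset.sum_nonneg fun i (_ : i ∈ univ) => sq_nonneg (Q i (en l))
    positivity
  have ha1 : ∀ l, a l ≤ 1 := by
    intro l; rw [ha]
    have h1 := diag_le_one P hP (em l)
    have h2 := diag_le_one Q hQ (en l)
    linarith
  have hasum : ∑ l, a l ≤ r := by
    rw [ha]
    have h1 := sum_cols_le P hP em (Fin.castLE_injective _)
    have h2 := sum_cols_le Q hQ en (Fin.castLE_injective _)
    rw [← Finset.sum_div, Finset.sum_add_distrib]
    linarith
  calc (∑ l : Fin (min m n), σ l * ∑ i, P i (em l) * Q i (en l))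
      ≤ ∑ l, σ l * a l :=
        Finset.sum_le_sum fun l _ => mul_le_mul_of_nonneg_left (hca l) (hσ0 l)
    _ ≤ _ := sum_aux (min m n) r σ a hσ hσ0 ha0 ha1 hasum
end
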